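/- arXiv:1606.06886 — 5 statements merged into one kernel-verified Lean document; each statement's English description precedes it below -/
import Mathlib

section
/- Let p ≥ 3 be a real number and let u : ℝ³ × [0,∞) → ℝ be a C³ solution of ∂ₜ²u − Δu + |∂ₜu|^{p−1}∂ₜu = 0 that is spatially compactly supported on compact time intervals. Let v = D^α u be any first-order space-time partial derivative of u (v = ∂_{x_i}u for some i, or v = ∂ₜu). Then for every t ≥ 0, (1/2)∫_{ℝ³}(|∇v(x,t)|² + (∂ₜv(x,t))²)dx + p∫₀ᵗ ∫_{ℝ³} |∂ₛu(x,s)|^{p−1}(∂ₛv(x,s))² dx ds = (1/2)∫_{ℝ³}(|∇v(x,0)|² + (∂ₜv(x,0))²)dx. -/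
open MeasureTheory Set Real
open scoped ENNReal

noncomputable section

/-- Euclidean space ℝ³. -/
abbrev E3 : Type := EuclideanSpace ℝ (Fin 3)

/-- Time derivative ∂ₜ of a function of (x, t) ∈ ℝ³ × ℝ. -/
def pt (u : E3 × ℝ → ℝ) : E3 × ℝ → ℝ := fun z => fderiv ℝ u z ((0 : E3), (1 : ℝ))

/-- Spatial partial derivative ∂_{x i}. -/
def px (i : Fin 3) (u : E3 × ℝ → ℝ) : E3 × ℝ → ℝ :=
  fun z => fderiv ℝ u z (EuclideanSpace.single i 1, (0 : ℝ))

/-- Spatial Laplacian Δ (in the x variables). -/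
def lap (u : E3 × ℝ → ℝ) : E3 × ℝ → ℝ := fun z => ∑ i : Fin 3, px i (px i u) z

/-- `u` is spatially compactly supported on compact time intervals. -/
def SpatialCptSupp (u : E3 × ℝ → ℝ) : Prop :=
  ∀ T : ℝ, 0 < T → ∃ R > (0 : ℝ), ∀ (x : E3) (t : ℝ),
    R ≤ ‖x‖ → 0 ≤ t → t ≤ T → u (x, t) = 0

/-- `u` is radially symmetric in `x` (for nonnegative times). -/
def RadialIn (u : E3 × ℝ → ℝ) : Prop :=
  ∀ (x y : E3) (t : ℝ), 0 ≤ t → ‖x‖ = ‖y‖ → u (x, t) = u (y, t)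

/-- The four coordinate directions of space-time ℝ³ × ℝ: directions 0,1,2 are spatial,
direction 3 is time. -/
def dir4 : Fin 4 → E3 × ℝ := fun i =>
  if h : (i : ℕ) < 3 then (EuclideanSpace.single ⟨(i : ℕ), h⟩ 1, (0 : ℝ))
  else ((0 : E3), (1 : ℝ))

/-- Directional derivative along `v`. -/
def pdir (v : E3 × ℝ) (u : E3 × ℝ → ℝ) : E3 × ℝ → ℝ := fun z => fderiv ℝ u z v

/-- Mixed space-time partial derivative `D^α` of total order `n`, encoded by a tuple
`m : Fin n → Fin 4` of coordinate directions. -/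
def Dmix : {n : ℕ} → (Fin n → Fin 4) → (E3 × ℝ → ℝ) → (E3 × ℝ → ℝ)
  | 0, _, u => u
  | _ + 1, m, u => pdir (dir4 (m 0)) (Dmix (fun i => m i.succ) u)

/-- Squared length of the full space-time gradient `Dv = (∇v, ∂ₜv)` at a point. -/
def DgradSq (v : E3 × ℝ → ℝ) (z : E3 × ℝ) : ℝ := ∑ j : Fin 4, (pdir (dir4 j) v z) ^ 2

/-- Energy density `|∇v|² + (∂ₜv)²` of the space-time gradient `Dv = (∇v, ∂ₜv)`. -/
def eDen (v : E3 × ℝ → ℝ) (z : E3 × ℝ) : ℝ := (∑ i : Fin 3, (px i v z) ^ 2) + (pt v z) ^ 2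

/-! ### Auxiliary lemmas -/

open Filter
open scoped Topology

lemma contDiff_pdir {n : ℕ} (d : E3 × ℝ) {f : E3 × ℝ → ℝ} (hf : ContDiff ℝ (n+1 : ℕ) f) :
    ContDiff ℝ n (pdir d f) := by
  have h := hf.fderiv_right (m := n) (by exact_mod_cast le_rfl)
  exact (ContinuousLinearMap.apply ℝ ℝ d).contDiff.comp h

lemma pdir_pdir_eq {z : E3 × ℝ} {f : E3 × ℝ → ℝ} (hf : ContDiffAt ℝ 2 f z) (a b : E3 × ℝ) :
    pdir a (pdir b f) z = fderiv ℝ (fderiv ℝ f) z a b := by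
  have hdiff : DifferentiableAt ℝ (fderiv ℝ f) z := by
    have := hf.fderiv_right (m := 1) (by norm_num)
    exact this.differentiableAt (by norm_num)
  have hb : pdir b f = fun w => (fderiv ℝ f w) b := rfl
  rw [pdir, hb]
  have := fderiv_clm_apply (c := fderiv ℝ f) (u := fun _ => b) hdiff (differentiableAt_const b)
  simp [this]

lemma pdir_comm {f : E3 × ℝ → ℝ} (hf : ContDiff ℝ 2 f) (a b : E3 × ℝ) (z : E3 × ℝ) :
    pdir a (pdir b f) z = pdir b (pdir a f) z := by
  rw [pdir_pdir_eq hf.contDiffAt a b, pdir_pdir_eq hf.contDiffAt b a]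
  exact ((hf.contDiffAt (x := z)).isSymmSndFDerivAt (by norm_num)).eq a b

lemma pdir_contDiff2 {u : E3 × ℝ → ℝ} (hu : ContDiff ℝ 3 u) (a : E3 × ℝ) :
    ContDiff ℝ 2 (pdir a u) := by
  have hu3' : ContDiff ℝ ((2:ℕ)+1 : ℕ) u := by exact_mod_cast hu
  have := contDiff_pdir (n := 2) a hu3'
  exact_mod_cast this

lemma pdir_contDiff1 {u : E3 × ℝ → ℝ} (hu : ContDiff ℝ 3 u) (a b : E3 × ℝ) :
    ContDiff ℝ 1 (pdir a (pdir b u)) := by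
  have h2 : ContDiff ℝ ((1:ℕ)+1 : ℕ) (pdir b u) := by exact_mod_cast pdir_contDiff2 hu b
  have := contDiff_pdir (n := 1) a h2
  exact_mod_cast this

lemma pdir_cont3 {u : E3 × ℝ → ℝ} (hu : ContDiff ℝ 3 u) (a b c : E3 × ℝ) :
    Continuous (pdir a (pdir b (pdir c u))) := by
  have h1 : ContDiff ℝ ((0:ℕ)+1 : ℕ) (pdir b (pdir c u)) := by
    exact_mod_cast pdir_contDiff1 hu b c
  have := contDiff_pdir (n := 0) a h1
  exact_mod_cast this.continuous

/-- time-slice derivative -/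
lemma hasDerivAt_slice_t {f : E3 × ℝ → ℝ} (x : E3) (t : ℝ) (hf : DifferentiableAt ℝ f (x, t)) :
    HasDerivAt (fun s => f (x, s)) (pt f (x, t)) t := by
  have hcurve : HasDerivAt (fun s : ℝ => ((x : E3), s)) ((0 : E3), (1 : ℝ)) t :=
    (hasDerivAt_const t x).prodMk (hasDerivAt_id t)
  exact hf.hasFDerivAt.comp_hasDerivAt t hcurve

/-- spatial slice derivative (Fréchet form) -/
lemma hasFDerivAt_slice_x {f : E3 × ℝ → ℝ} (x : E3) (t : ℝ) (hf : DifferentiableAt ℝ f (x, t)) :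
    HasFDerivAt (fun y => f (y, t))
      ((fderiv ℝ f (x, t)).comp ((ContinuousLinearMap.id ℝ E3).prod 0)) x := by
  have hins : HasFDerivAt (fun y : E3 => ((y : E3), (t : ℝ)))
      ((ContinuousLinearMap.id ℝ E3).prod 0) x :=
    (hasFDerivAt_id x).prodMk (hasFDerivAt_const t x)
  exact hf.hasFDerivAt.comp x hins

lemma differentiable_slice_x {f : E3 × ℝ → ℝ} (t : ℝ) (hf : Differentiable ℝ f) :
    Differentiable ℝ (fun y => f (y, t)) :=
  fun x => (hasFDerivAt_slice_x x t (hf _)).differentiableAt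

lemma fderiv_slice_x {f : E3 × ℝ → ℝ} (x : E3) (t : ℝ) (e : E3)
    (hf : DifferentiableAt ℝ f (x, t)) :
    fderiv ℝ (fun y => f (y, t)) x e = fderiv ℝ f (x, t) (e, 0) := by
  rw [(hasFDerivAt_slice_x x t hf).fderiv]
  simp

private lemma rpow_succ_eq {a q : ℝ} (ha : a ≠ 0) : a ^ (q + 1) = a ^ q * a :=
  Real.rpow_add_one ha q

/-- derivative of the nonlinearity w ↦ |w|^(p-1) * w -/
lemma hasDerivAt_nonlin {p : ℝ} (hp : 3 ≤ p) (w : ℝ) :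
    HasDerivAt (fun y : ℝ => |y| ^ (p - 1) * y) (p * |w| ^ (p - 1)) w := by
  have hp1 : (1:ℝ) ≤ p - 1 := by linarith
  rcases lt_trichotomy w 0 with hw | hw | hw
  · have h1 : HasDerivAt (fun y : ℝ => -y) (-1) w := (hasDerivAt_id w).neg
    have h2 := (h1.rpow_const (p := p) (Or.inl (by simpa using hw.ne))).neg
    have heq : (fun y : ℝ => -((-y) ^ p)) =ᶠ[𝓝 w] fun y : ℝ => |y| ^ (p - 1) * y := by
      filter_upwards [Iio_mem_nhds hw] with y (hy : y < 0)
      have : (-y : ℝ) ^ (p - 1 + 1) = (-y) ^ (p-1) * (-y) := rpow_succ_eq (by linarith)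
      rw [abs_of_neg hy]
      rw [show p - 1 + 1 = p by ring] at this
      rw [this]; ring
    have h3 := h2.congr_of_eventuallyEq heq.symm
    refine h3.congr_deriv ?_
    rw [abs_of_neg hw]; ring
  · subst hw
    rw [hasDerivAt_iff_tendsto_slope]
    have hcont : Continuous fun y : ℝ => |y| ^ (p - 1) :=
      continuous_abs.rpow_const (fun _ => Or.inr (by linarith))
    have habs : Tendsto (fun y : ℝ => |y| ^ (p - 1)) (𝓝[≠] (0:ℝ)) (𝓝 (p * |(0:ℝ)| ^ (p - 1))) := by
      have := (hcont.tendsto 0).mono_left (nhdsWithin_le_nhds (s := {(0:ℝ)}ᶜ))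
      simpa [abs_zero, Real.zero_rpow (by linarith : p - 1 ≠ 0)] using this
    refine habs.congr' ?_
    filter_upwards [self_mem_nhdsWithin] with y (hy : y ≠ 0)
    simp only [slope_def_field]
    field_simp
    simp
  · have key : HasDerivAt (fun y : ℝ => y ^ p) (p * w ^ (p - 1)) w :=
      (Real.hasDerivAt_rpow_const (p := p) (Or.inl hw.ne')).congr_deriv (by ring)
    have heq : (fun y : ℝ => y ^ p) =ᶠ[𝓝 w] fun y : ℝ => |y| ^ (p - 1) * y := by
      filter_upwards [Ioi_mem_nhds hw] with y (hy : 0 < y)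
      have : (y : ℝ) ^ (p - 1 + 1) = y ^ (p-1) * y := rpow_succ_eq (by linarith)
      rw [abs_of_pos hy]
      rw [show p - 1 + 1 = p by ring] at this
      rw [this]
    have h3 := key.congr_of_eventuallyEq heq.symm
    refine h3.congr_deriv ?_
    rw [abs_of_pos hw]

/-- one step of support propagation -/
lemma supp_step {w : E3 × ℝ → ℝ} (hw : Differentiable ℝ w) {R T : ℝ}
    (h : ∀ (x : E3) (t : ℝ), R < ‖x‖ → 0 ≤ t → t ≤ T + 1 → w (x, t) = 0)
    (d : E3 × ℝ) (hd0 : 0 ≤ d.2) (hd1 : d.2 ≤ 1) :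
    ∀ (x : E3) (t : ℝ), R < ‖x‖ → 0 ≤ t → t ≤ T → pdir d w (x, t) = 0 := by
  intro x t hx ht0 htT
  set z : E3 × ℝ := (x, t) with hz
  have hline : HasDerivAt (fun s : ℝ => w (z + s • d)) (pdir d w z) 0 :=
    (hw z).hasFDerivAt.hasLineDerivAt d
  have hnear : ∀ᶠ s in 𝓝[Ici (0:ℝ)] 0, w (z + s • d) = 0 := by
    have hcont : Continuous fun s : ℝ => ‖x + s • d.1‖ := by fun_prop
    have h0 : R < ‖x + (0:ℝ) • d.1‖ := by simpa using hx
    have hev1 : ∀ᶠ s in 𝓝 (0:ℝ), R < ‖x + s • d.1‖ :=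
      (hcont.continuousAt (x := 0)).eventually (eventually_gt_nhds h0)
    have hev2 : ∀ᶠ s in 𝓝 (0:ℝ), |s| < 1 := by
      have habs : Continuous fun s : ℝ => |s| := by fun_prop
      have := (habs.continuousAt (x := 0)).eventually
        (eventually_lt_nhds (by norm_num : |(0:ℝ)| < 1))
      simpa using this
    filter_upwards [nhdsWithin_le_nhds hev1, nhdsWithin_le_nhds hev2,
      self_mem_nhdsWithin] with s h1 h2 (hs : 0 ≤ s)
    have hz2 : z.2 + s * d.2 ≤ T + 1 := by
      have : s * d.2 ≤ 1 := by nlinarith [abs_nonneg s, le_of_abs_le (le_of_lt h2)]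
      simp only [hz]; nlinarith [le_of_abs_le (le_of_lt h2)]
    have hz0 : 0 ≤ z.2 + s * d.2 := by simp only [hz]; nlinarith
    have := h (x + s • d.1) (t + s * d.2) h1 (by simpa [hz] using hz0) (by simpa [hz] using hz2)
    rw [show z + s • d = (x + s • d.1, t + s * d.2) from Prod.ext (by simp [hz]) (by simp [hz])]
    exact this
  have hW : HasDerivWithinAt (fun s : ℝ => w (z + s • d)) 0 (Ici (0:ℝ)) 0 := by
    have hzero : HasDerivWithinAt (fun _ : ℝ => (0:ℝ)) 0 (Ici (0:ℝ)) 0 :=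
      (hasDerivAt_const _ _).hasDerivWithinAt
    refine hzero.congr_of_eventuallyEq ?_ ?_
    · exact hnear
    · simpa using h x t hx ht0 (by linarith)
  have hud : UniqueDiffWithinAt ℝ (Ici (0:ℝ)) 0 := uniqueDiffOn_Ici 0 0 self_mem_Ici
  have e1 := hline.hasDerivWithinAt.derivWithin hud
  have e2 := hW.derivWithin hud
  rw [e2] at e1
  exact e1.symm

abbrev e4 : E3 × ℝ := ((0 : E3), (1 : ℝ))
abbrev ex (i : Fin 3) : E3 × ℝ := (EuclideanSpace.single i 1, (0 : ℝ))

lemma pt_eq (f : E3 × ℝ → ℝ) : pt f = pdir e4 f := rfl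
lemma px_eq (i : Fin 3) (f : E3 × ℝ → ℝ) : px i f = pdir (ex i) f := rfl

/-- The differentiated PDE. -/
lemma pde_deriv {p : ℝ} (hp : 3 ≤ p) {u : E3 × ℝ → ℝ} (hu : ContDiff ℝ 3 u)
    (heq : ∀ (x : E3) (t : ℝ), 0 ≤ t →
      pt (pt u) (x, t) - lap u (x, t) + |pt u (x, t)| ^ (p - 1) * pt u (x, t) = 0)
    (d : E3 × ℝ) :
    ∀ (x : E3) (t : ℝ), 0 < t →
      pt (pt (pdir d u)) (x, t) - lap (pdir d u) (x, t)
        + p * |pt u (x, t)| ^ (p - 1) * pt (pdir d u) (x, t) = 0 := by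
  have hu2 : ContDiff ℝ 2 u := hu.of_le (by norm_num)
  have hpd2 : ∀ a : E3 × ℝ, ContDiff ℝ 2 (pdir a u) := pdir_contDiff2 hu
  have hdiff2 : ∀ a b : E3 × ℝ, Differentiable ℝ (pdir a (pdir b u)) := fun a b =>
    (pdir_contDiff1 hu a b).differentiable (by norm_num)
  intro x t ht
  set z : E3 × ℝ := (x, t) with hzdef
  have hAder : HasFDerivAt (fun w => pt (pt u) w - lap u w)
      (fderiv ℝ (pt (pt u)) z - fderiv ℝ (lap u) z) z := by
    have h1 : DifferentiableAt ℝ (pt (pt u)) z := by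
      rw [pt_eq, pt_eq]; exact (hdiff2 e4 e4) z
    have h2 : DifferentiableAt ℝ (lap u) z := by
      have : ∀ i : Fin 3, DifferentiableAt ℝ (px i (px i u)) z := by
        intro i; rw [px_eq, px_eq]; exact (hdiff2 (ex i) (ex i)) z
      exact DifferentiableAt.fun_sum (fun i _ => this i)
    exact h1.hasFDerivAt.sub h2.hasFDerivAt
  have hBdiff : DifferentiableAt ℝ (pt u) z := by
    rw [pt_eq]; exact ((hpd2 e4).differentiable (by norm_num)) z
  have hNder : HasFDerivAt (fun w => |pt u w| ^ (p - 1) * pt u w)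
      ((p * |pt u z| ^ (p - 1)) • fderiv ℝ (pt u) z) z := by
    have := (hasDerivAt_nonlin hp (pt u z)).comp_hasFDerivAt z hBdiff.hasFDerivAt
    exact this
  have hGder : HasFDerivAt (fun w => pt (pt u) w - lap u w + |pt u w| ^ (p - 1) * pt u w)
      ((fderiv ℝ (pt (pt u)) z - fderiv ℝ (lap u) z)
        + (p * |pt u z| ^ (p - 1)) • fderiv ℝ (pt u) z) z := hAder.add hNder
  have hzero : (fun w : E3 × ℝ => pt (pt u) w - lap u w + |pt u w| ^ (p - 1) * pt u w)
      =ᶠ[𝓝 z] (fun _ => (0:ℝ)) := by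
    have hopen : IsOpen {w : E3 × ℝ | 0 < w.2} := isOpen_lt continuous_const continuous_snd
    filter_upwards [hopen.mem_nhds (by simpa [hzdef] using ht)] with w (hw : 0 < w.2)
    exact heq w.1 w.2 hw.le
  have hfz : fderiv ℝ (fun w : E3 × ℝ => pt (pt u) w - lap u w + |pt u w| ^ (p - 1) * pt u w) z
      = 0 := by
    rw [hzero.fderiv_eq]; exact fderiv_const_apply 0
  have key : fderiv ℝ (pt (pt u)) z d - fderiv ℝ (lap u) z d
      + (p * |pt u z| ^ (p - 1)) * fderiv ℝ (pt u) z d = 0 := by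
    have h0 := hGder.fderiv
    rw [hfz] at h0
    have := congrArg (fun L : (E3 × ℝ) →L[ℝ] ℝ => L d) h0.symm
    simpa [smul_eq_mul] using this
  have comm1 : ∀ a : E3 × ℝ, pdir d (pdir a u) = pdir a (pdir d u) := fun a =>
    funext fun w => pdir_comm hu2 d a w
  have hptpt : fderiv ℝ (pt (pt u)) z d = pt (pt (pdir d u)) z := by
    rw [pt_eq, pt_eq]
    have s1 : pdir d (pdir e4 (pdir e4 u)) z = pdir e4 (pdir d (pdir e4 u)) z :=
      pdir_comm (hpd2 e4) d e4 z
    have s2 : pdir d (pdir e4 u) = pdir e4 (pdir d u) := comm1 e4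
    show pdir d (pdir e4 (pdir e4 u)) z = _
    rw [s1, s2]
    rfl
  have hlap : fderiv ℝ (lap u) z d = lap (pdir d u) z := by
    have hterm : ∀ i : Fin 3, HasFDerivAt (fun w => px i (px i u) w)
        (fderiv ℝ (px i (px i u)) z) z := by
      intro i
      have : DifferentiableAt ℝ (px i (px i u)) z := by
        rw [px_eq, px_eq]; exact (hdiff2 (ex i) (ex i)) z
      exact this.hasFDerivAt
    have hsum : HasFDerivAt (lap u) (∑ i : Fin 3, fderiv ℝ (px i (px i u)) z) z := by
      have := HasFDerivAt.sum (fun i (_ : i ∈ Finset.univ) => hterm i)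
      exact this
    rw [hsum.fderiv]
    rw [ContinuousLinearMap.sum_apply]
    show ∑ i : Fin 3, pdir d (px i (px i u)) z = _
    unfold lap
    refine Finset.sum_congr rfl (fun i _ => ?_)
    rw [px_eq, px_eq]
    have s1 : pdir d (pdir (ex i) (pdir (ex i) u)) z = pdir (ex i) (pdir d (pdir (ex i) u)) z :=
      pdir_comm (hpd2 (ex i)) d (ex i) z
    have s2 : pdir d (pdir (ex i) u) = pdir (ex i) (pdir d u) := comm1 (ex i)
    show pdir d (pdir (ex i) (pdir (ex i) u)) z = _
    rw [s1, s2]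
    rfl
  have hptu : fderiv ℝ (pt u) z d = pt (pdir d u) z := by
    rw [pt_eq]
    show pdir d (pdir e4 u) z = _
    rw [comm1 e4]
    rfl
  rw [hptpt, hlap, hptu] at key
  linarith [key]

/-- slice integrability -/
lemma slice_integrable {f : E3 × ℝ → ℝ} (hf : Continuous f) {R : ℝ} (s : ℝ)
    (h0 : ∀ x : E3, R < ‖x‖ → f (x, s) = 0) : Integrable (fun x : E3 => f (x, s)) := by
  have hcs : HasCompactSupport (fun x : E3 => f (x, s)) := by
    refine HasCompactSupport.intro (isCompact_closedBall (0:E3) R) ?_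
    intro x hx
    apply h0
    simpa [mem_closedBall_zero_iff, not_le] using hx
  exact (hf.comp (continuous_id.prodMk continuous_const)).integrable_of_hasCompactSupport hcs

/-- second-order energy identity for any first-order space-time
derivative `v = ∂_{x_i}u` (j = 0,1,2) or `v = ∂ₜu` (j = 3). -/
theorem second_order_energy_identity
    (p : ℝ) (hp : 3 ≤ p)
    (u : E3 × ℝ → ℝ) (hu : ContDiff ℝ 3 u)
    (heq : ∀ (x : E3) (t : ℝ), 0 ≤ t →
      pt (pt u) (x, t) - lap u (x, t) + |pt u (x, t)| ^ (p - 1) * pt u (x, t) = 0)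
    (hsupp : SpatialCptSupp u) :
    ∀ j : Fin 4, ∀ t : ℝ, 0 ≤ t →
      ((1 / 2 : ℝ≥0∞) * ∫⁻ x : E3, ENNReal.ofReal (eDen (pdir (dir4 j) u) (x, t)))
          + ENNReal.ofReal p *
            (∫⁻ s in Icc (0 : ℝ) t, ∫⁻ x : E3,
              ENNReal.ofReal (|pt u (x, s)| ^ (p - 1) * (pt (pdir (dir4 j) u) (x, s)) ^ 2))
        = (1 / 2 : ℝ≥0∞) * ∫⁻ x : E3, ENNReal.ofReal (eDen (pdir (dir4 j) u) (x, 0)) := by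
  intro j t₀ ht₀
  set d : E3 × ℝ := dir4 j with hd
  have hd01 : 0 ≤ d.2 ∧ d.2 ≤ 1 := by
    rw [hd]; unfold dir4; split <;> norm_num
  set v : E3 × ℝ → ℝ := pdir d u with hv
  have hv2 : ContDiff ℝ 2 v := pdir_contDiff2 hu d
  have hudiff : Differentiable ℝ u := hu.differentiable (by norm_num)
  have hdiff1 : ∀ a : E3 × ℝ, Differentiable ℝ (pdir a u) := fun a =>
    (pdir_contDiff2 hu a).differentiable (by norm_num)
  have hdiff2 : ∀ a b : E3 × ℝ, Differentiable ℝ (pdir a (pdir b u)) := fun a b =>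
    (pdir_contDiff1 hu a b).differentiable (by norm_num)
  have hcont3 : ∀ a b c : E3 × ℝ, Continuous (pdir a (pdir b (pdir c u))) := pdir_cont3 hu
  set T : ℝ := t₀ + 1 with hT
  have hTpos : 0 < T := by rw [hT]; linarith
  obtain ⟨R, hRpos, hsuppR⟩ := hsupp (T + 3) (by linarith)
  -- support propagation
  have h0 : ∀ (x : E3) (t : ℝ), R < ‖x‖ → 0 ≤ t → t ≤ (T + 2) + 1 → u (x, t) = 0 :=
    fun x t hx h1 h2 => hsuppR x t hx.le h1 (by linarith)
  have hs1 : ∀ a : E3 × ℝ, 0 ≤ a.2 → a.2 ≤ 1 →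
      ∀ (x : E3) (t : ℝ), R < ‖x‖ → 0 ≤ t → t ≤ T + 2 → pdir a u (x, t) = 0 :=
    fun a ha0 ha1 => supp_step hudiff h0 a ha0 ha1
  have hs2 : ∀ a b : E3 × ℝ, 0 ≤ a.2 → a.2 ≤ 1 → 0 ≤ b.2 → b.2 ≤ 1 →
      ∀ (x : E3) (t : ℝ), R < ‖x‖ → 0 ≤ t → t ≤ T + 1 → pdir a (pdir b u) (x, t) = 0 :=
    fun a b ha0 ha1 hb0 hb1 => supp_step (hdiff1 b)
      (fun x t hx h1 h2 => hs1 b hb0 hb1 x t hx h1 (by linarith)) a ha0 ha1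
  have hs3 : ∀ a b c : E3 × ℝ, 0 ≤ a.2 → a.2 ≤ 1 → 0 ≤ b.2 → b.2 ≤ 1 → 0 ≤ c.2 → c.2 ≤ 1 →
      ∀ (x : E3) (t : ℝ), R < ‖x‖ → 0 ≤ t → t ≤ T → pdir a (pdir b (pdir c u)) (x, t) = 0 :=
    fun a b c ha0 ha1 hb0 hb1 hc0 hc1 => supp_step (hdiff2 b c)
      (fun x t hx h1 h2 => hs2 b c hb0 hb1 hc0 hc1 x t hx h1 (by linarith)) a ha0 ha1
  -- concrete support facts
  have hptv0 : ∀ (x : E3) (s : ℝ), R < ‖x‖ → 0 ≤ s → s ≤ T → pt v (x, s) = 0 := by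
    intro x s hx h1 h2
    exact hs2 e4 d (by norm_num) (by norm_num) hd01.1 hd01.2 x s hx h1 (by linarith)
  have hpxv0 : ∀ (i : Fin 3) (x : E3) (s : ℝ), R < ‖x‖ → 0 ≤ s → s ≤ T → px i v (x, s) = 0 := by
    intro i x s hx h1 h2
    exact hs2 (ex i) d (by norm_num) (by norm_num) hd01.1 hd01.2 x s hx h1 (by linarith)
  -- main objects
  set Q : E3 × ℝ → ℝ := fun z => |pt u z| ^ (p - 1) * (pt v z) ^ 2 with hQ
  set eD : E3 × ℝ → ℝ := fun z =>
    2 * (∑ i : Fin 3, px i v z * pt (px i v) z) + 2 * pt v z * pt (pt v) z with heD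
  set Efun : ℝ → ℝ := fun s => ∫ x : E3, eDen v (x, s) with hEfun
  set Gfun : ℝ → ℝ := fun s => ∫ x : E3, Q (x, s) with hGfun
  -- continuity of the various integrands
  have hptucont : Continuous (pt u) := (hdiff1 e4).continuous
  have hptvcont : Continuous (pt v) := (hdiff2 e4 d).continuous
  have hpxvcont : ∀ i : Fin 3, Continuous (px i v) := fun i => (hdiff2 (ex i) d).continuous
  have hQcont : Continuous Q := by
    apply Continuous.mul
    · exact (continuous_abs.comp hptucont).rpow_const (fun _ => Or.inr (by linarith))
    · exact hptvcont.pow 2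
  have heDencont : Continuous (fun z => eDen v z) := by
    unfold eDen
    exact ((continuous_finset_sum _ fun i _ => (hpxvcont i).pow 2).add (hptvcont.pow 2))
  have heDcont : Continuous eD := by
    apply Continuous.add
    · exact continuous_const.mul (continuous_finset_sum _ fun i _ =>
        (hpxvcont i).mul (hcont3 e4 (ex i) d))
    · exact (continuous_const.mul hptvcont).mul (hcont3 e4 e4 d)
  -- support of integrands
  have hQ0 : ∀ (x : E3) (s : ℝ), R < ‖x‖ → 0 ≤ s → s ≤ T → Q (x, s) = 0 := by
    intro x s hx h1 h2
    simp only [hQ, hptv0 x s hx h1 h2]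
    ring
  have heDen0 : ∀ (x : E3) (s : ℝ), R < ‖x‖ → 0 ≤ s → s ≤ T → eDen v (x, s) = 0 := by
    intro x s hx h1 h2
    unfold eDen
    rw [hptv0 x s hx h1 h2]
    rw [Finset.sum_eq_zero (fun i _ => by rw [hpxv0 i x s hx h1 h2]; ring)]
    ring
  have heD0 : ∀ (x : E3) (s : ℝ), R < ‖x‖ → 0 ≤ s → s ≤ T → eD (x, s) = 0 := by
    intro x s hx h1 h2
    simp only [heD, hptv0 x s hx h1 h2]
    rw [Finset.sum_eq_zero (fun i _ => by rw [hpxv0 i x s hx h1 h2]; ring)]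
    ring
  -- nonnegativity
  have hQnn : ∀ z, 0 ≤ Q z := fun z =>
    mul_nonneg (Real.rpow_nonneg (abs_nonneg _) _) (sq_nonneg _)
  have heDennn : ∀ z, 0 ≤ eDen v z := fun z =>
    add_nonneg (Finset.sum_nonneg fun i _ => sq_nonneg _) (sq_nonneg _)
  -- bound constructor
  have hbound : ∀ f : E3 × ℝ → ℝ, Continuous f →
      (∀ (x : E3) (s : ℝ), R < ‖x‖ → 0 ≤ s → s ≤ T → f (x, s) = 0) →
      ∃ bound : E3 → ℝ, Integrable bound ∧
        ∀ (x : E3) (s : ℝ), 0 ≤ s → s ≤ T → ‖f (x, s)‖ ≤ bound x := by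
    intro f hf hz
    obtain ⟨C, hC⟩ := ((isCompact_closedBall (0:E3) R).prod
      (isCompact_Icc (a := (0:ℝ)) (b := T))).exists_bound_of_continuousOn hf.continuousOn
    refine ⟨(Metric.closedBall (0:E3) R).indicator (fun _ => max C 0), ?_, ?_⟩
    · exact ((integrableOn_const measure_closedBall_lt_top.ne).integrable_indicator
        measurableSet_closedBall)
    · intro x s hs0 hsT
      by_cases hx : x ∈ Metric.closedBall (0:E3) R
      · rw [indicator_of_mem hx]
        exact le_trans (hC (x, s) (Set.mk_mem_prod hx ⟨hs0, hsT⟩)) (le_max_left _ _)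
      · rw [indicator_of_notMem hx]
        rw [hz x s (by simpa [mem_closedBall_zero_iff, not_le] using hx) hs0 hsT]
        simp
  -- integrability of slices
  have hQint : ∀ s : ℝ, 0 ≤ s → s ≤ T → Integrable (fun x : E3 => Q (x, s)) := fun s h1 h2 =>
    slice_integrable hQcont s (fun x hx => hQ0 x s hx h1 h2)
  have heDenint : ∀ s : ℝ, 0 ≤ s → s ≤ T → Integrable (fun x : E3 => eDen v (x, s)) :=
    fun s h1 h2 => slice_integrable heDencont s (fun x hx => heDen0 x s hx h1 h2)
  -- pointwise time derivative of the energy density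
  have hdiffpxv : ∀ i : Fin 3, Differentiable ℝ (px i v) := fun i => by
    rw [px_eq, hv]; exact hdiff2 (ex i) d
  have hdiffptv : Differentiable ℝ (pt v) := by
    rw [pt_eq, hv]; exact hdiff2 e4 d
  have hEden_deriv : ∀ (x : E3) (s : ℝ),
      HasDerivAt (fun σ => eDen v (x, σ)) (eD (x, s)) s := by
    intro x s
    have h1 : ∀ i : Fin 3, HasDerivAt (fun σ => px i v (x, σ)) (pt (px i v) (x, s)) s :=
      fun i => hasDerivAt_slice_t x s ((hdiffpxv i) _)
    have h1sq : ∀ i : Fin 3, HasDerivAt (fun σ => (px i v (x, σ)) ^ 2)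
        (2 * px i v (x, s) * pt (px i v) (x, s)) s := by
      intro i
      have := (h1 i).pow 2
      refine this.congr_deriv ?_
      simp
    have hsum : HasDerivAt (fun σ => ∑ i : Fin 3, (px i v (x, σ)) ^ 2)
        (∑ i : Fin 3, 2 * px i v (x, s) * pt (px i v) (x, s)) s :=
      HasDerivAt.fun_sum (fun i _ => h1sq i)
    have h2 : HasDerivAt (fun σ => pt v (x, σ)) (pt (pt v) (x, s)) s :=
      hasDerivAt_slice_t x s (hdiffptv _)
    have h2sq : HasDerivAt (fun σ => (pt v (x, σ)) ^ 2)
        (2 * pt v (x, s) * pt (pt v) (x, s)) s := by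
      have := h2.pow 2
      refine this.congr_deriv ?_
      simp
    have hfinal := hsum.add h2sq
    have hgoal : (fun σ => eDen v (x, σ)) =
        fun σ => (∑ i : Fin 3, (px i v (x, σ)) ^ 2) + (pt v (x, σ)) ^ 2 := rfl
    rw [hgoal]
    refine hfinal.congr_deriv ?_
    simp only [heD, Finset.mul_sum]
    congr 1
    exact Finset.sum_congr rfl (fun i _ => by ring)
  -- differentiation under the integral sign
  have hslicecont : ∀ f : E3 × ℝ → ℝ, Continuous f → ∀ σ : ℝ,
      Continuous (fun x : E3 => f (x, σ)) := fun f hf σ =>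
    hf.comp (continuous_id.prodMk continuous_const)
  have hEderiv : ∀ s : ℝ, 0 < s → s < T →
      HasDerivAt Efun (∫ x : E3, eD (x, s)) s := by
    intro s hs0 hsT
    obtain ⟨bound, hbi, hble⟩ := hbound eD heDcont heD0
    set ε : ℝ := min s (T - s) with hε
    have hεpos : 0 < ε := lt_min hs0 (by linarith)
    have hball : ∀ σ ∈ Metric.ball s ε, 0 ≤ σ ∧ σ ≤ T := by
      intro σ hσ
      rw [Metric.mem_ball, Real.dist_eq, abs_sub_lt_iff] at hσ
      constructor
      · nlinarith [min_le_left s (T - s), hσ.1, hσ.2]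
      · nlinarith [min_le_right s (T - s), hσ.1, hσ.2]
    have := hasDerivAt_integral_of_dominated_loc_of_deriv_le (F := fun σ (x : E3) => eDen v (x, σ))
      (F' := fun σ (x : E3) => eD (x, σ)) (bound := bound) (Metric.ball_mem_nhds s hεpos)
      (Filter.Eventually.of_forall fun σ =>
        (hslicecont _ heDencont σ).aestronglyMeasurable)
      (heDenint s hs0.le hsT.le)
      ((hslicecont _ heDcont s).aestronglyMeasurable)
      (Filter.Eventually.of_forall fun x => fun σ hσ =>
        hble x σ (hball σ hσ).1 (hball σ hσ).2)
      hbi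
      (Filter.Eventually.of_forall fun x => fun σ _ => hEden_deriv x σ)
    exact this.2
  -- integration by parts and the PDE
  have hIBP : ∀ s : ℝ, 0 < s → s ≤ T → (∫ x : E3, eD (x, s)) = -(2 * p) * Gfun s := by
    intro s hs0 hsT
    have hcomm : ∀ (i : Fin 3) (z : E3 × ℝ), pt (px i v) z = px i (pt v) z := by
      intro i z
      rw [pt_eq, px_eq, pt_eq, px_eq]
      exact pdir_comm hv2 e4 (ex i) z
    have hptptv : Continuous (pt (pt v)) := hcont3 e4 e4 d
    have hptpxv : ∀ i : Fin 3, Continuous (pt (px i v)) := fun i => hcont3 e4 (ex i) d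
    have hpxptv : ∀ i : Fin 3, Continuous (px i (pt v)) := fun i => hcont3 (ex i) e4 d
    have hpxpxv : ∀ i : Fin 3, Continuous (px i (px i v)) := fun i => hcont3 (ex i) (ex i) d
    -- integrability of the various products
    have hint1 : ∀ i : Fin 3, Integrable (fun x : E3 => px i v (x, s) * pt (px i v) (x, s)) := by
      intro i
      exact slice_integrable (f := fun z => px i v z * pt (px i v) z)
        ((hpxvcont i).mul (hptpxv i)) s
        (fun x hx => by have h' := hpxv0 i x s hx hs0.le hsT; simp [h'])
    have hint2 : Integrable (fun x : E3 => pt v (x, s) * pt (pt v) (x, s)) :=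
      slice_integrable (f := fun z => pt v z * pt (pt v) z) (hptvcont.mul hptptv) s
        (fun x hx => by have h' := hptv0 x s hx hs0.le hsT; simp [h'])
    have hint3 : ∀ i : Fin 3, Integrable (fun x : E3 => px i (px i v) (x, s) * pt v (x, s)) := by
      intro i
      exact slice_integrable (f := fun z => px i (px i v) z * pt v z)
        ((hpxpxv i).mul hptvcont) s
        (fun x hx => by have h' := hptv0 x s hx hs0.le hsT; simp [h'])
    have hint4 : ∀ i : Fin 3, Integrable (fun x : E3 => px i v (x, s) * px i (pt v) (x, s)) := by
      intro i
      exact slice_integrable (f := fun z => px i v z * px i (pt v) z)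
        ((hpxvcont i).mul (hpxptv i)) s
        (fun x hx => by have h' := hpxv0 i x s hx hs0.le hsT; simp [h'])
    have hint5 : ∀ i : Fin 3, Integrable (fun x : E3 => px i v (x, s) * pt v (x, s)) := by
      intro i
      exact slice_integrable (f := fun z => px i v z * pt v z)
        ((hpxvcont i).mul hptvcont) s
        (fun x hx => by have h' := hptv0 x s hx hs0.le hsT; simp [h'])
    have hintlap : Integrable (fun x : E3 => lap v (x, s) * pt v (x, s)) :=
      slice_integrable (f := fun z => lap v z * pt v z)
        ((continuous_finset_sum _ fun i _ => hpxpxv i).mul hptvcont) s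
        (fun x hx => by have h' := hptv0 x s hx hs0.le hsT; simp [h'])
    -- split the integral
    have hsplit : (∫ x : E3, eD (x, s)) =
        2 * (∑ i : Fin 3, ∫ x : E3, px i v (x, s) * pt (px i v) (x, s))
          + 2 * ∫ x : E3, pt v (x, s) * pt (pt v) (x, s) := by
      have hfun : (fun x : E3 => eD (x, s)) = fun x : E3 =>
          2 * (∑ i : Fin 3, px i v (x, s) * pt (px i v) (x, s))
            + 2 * (pt v (x, s) * pt (pt v) (x, s)) := by
        funext x; simp only [heD]; ring
      rw [hfun, integral_add ((integrable_finset_sum _ fun i _ => hint1 i).const_mul 2)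
        (hint2.const_mul 2),
        MeasureTheory.integral_const_mul, MeasureTheory.integral_const_mul,
        integral_finset_sum _ fun i _ => hint1 i]
    -- integration by parts in each spatial direction
    have hibp : ∀ i : Fin 3, (∫ x : E3, px i v (x, s) * pt (px i v) (x, s))
        = -∫ x : E3, px i (px i v) (x, s) * pt v (x, s) := by
      intro i
      have h1a : (fun x : E3 => px i v (x, s) * pt (px i v) (x, s))
          = fun x : E3 => px i v (x, s) * px i (pt v) (x, s) := by
        funext x; rw [hcomm i (x, s)]
      have h1 : (fun x : E3 => px i v (x, s) * px i (pt v) (x, s))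
          = fun x : E3 => px i v (x, s) *
              fderiv ℝ (fun y : E3 => pt v (y, s)) x (EuclideanSpace.single i 1) := by
        funext x
        congr 1
        rw [fderiv_slice_x x s (EuclideanSpace.single i 1) (hdiffptv _)]
        rfl
      have h2 : (fun x : E3 => px i (px i v) (x, s) * pt v (x, s))
          = fun x : E3 => fderiv ℝ (fun y : E3 => px i v (y, s)) x (EuclideanSpace.single i 1)
              * pt v (x, s) := by
        funext x
        congr 1
        rw [fderiv_slice_x x s (EuclideanSpace.single i 1) ((hdiffpxv i) _)]
        rfl
      rw [h1a, h1, h2]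
      have hf'g := hint3 i
      rw [h2] at hf'g
      have hfg' := hint4 i
      rw [h1] at hfg'
      exact integral_mul_fderiv_eq_neg_fderiv_mul_of_integrable hf'g hfg' (hint5 i)
        (fun x _ => differentiable_slice_x s (hdiffpxv i) x) (fun x _ => differentiable_slice_x s hdiffptv x)
    -- sum up
    have hsum3 : (∑ i : Fin 3, ∫ x : E3, px i (px i v) (x, s) * pt v (x, s))
        = ∫ x : E3, lap v (x, s) * pt v (x, s) := by
      rw [← integral_finset_sum _ fun i _ => hint3 i]
      congr 1
      funext x
      unfold lap
      rw [Finset.sum_mul]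
    have hpde : ∀ x : E3, pt v (x, s) * pt (pt v) (x, s) - lap v (x, s) * pt v (x, s)
        = -p * Q (x, s) := by
      intro x
      have h := pde_deriv hp hu heq d x s hs0
      rw [← hv] at h
      simp only [hQ]
      linear_combination pt v (x, s) * h
    have hfinal : (∫ x : E3, pt v (x, s) * pt (pt v) (x, s))
        - (∫ x : E3, lap v (x, s) * pt v (x, s)) = -p * Gfun s := by
      rw [← integral_sub hint2 hintlap]
      have : (fun x : E3 => pt v (x, s) * pt (pt v) (x, s) - lap v (x, s) * pt v (x, s))
          = fun x : E3 => -p * Q (x, s) := funext fun x => hpde x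
      rw [this, MeasureTheory.integral_const_mul]
    have hGs : Gfun s = ∫ x : E3, Q (x, s) := rfl
    rw [hsplit, Finset.sum_congr rfl (fun i _ => hibp i)]
    rw [Finset.sum_neg_distrib, hsum3]
    linarith [hfinal]
  -- continuity of Efun and Gfun on [0, t₀]
  have hcontgen : ∀ f : E3 × ℝ → ℝ, Continuous f →
      (∀ (x : E3) (s : ℝ), R < ‖x‖ → 0 ≤ s → s ≤ T → f (x, s) = 0) →
      ContinuousOn (fun s => ∫ x : E3, f (x, s)) (Icc 0 t₀) := by
    intro f hf hz
    obtain ⟨bound, hbi, hble⟩ := hbound f hf hz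
    intro s₀ hs₀
    apply continuousWithinAt_of_dominated (bound := bound)
    · exact Filter.Eventually.of_forall fun σ =>
        (hslicecont _ hf σ).aestronglyMeasurable
    · filter_upwards [self_mem_nhdsWithin] with σ hσ
      exact Filter.Eventually.of_forall fun x =>
        hble x σ hσ.1 (le_trans hσ.2 (by rw [hT]; linarith))
    · exact hbi
    · exact Filter.Eventually.of_forall fun x =>
        ((hf.comp (continuous_const.prodMk continuous_id)).continuousAt).continuousWithinAt
  have hEcont : ContinuousOn Efun (Icc 0 t₀) := hcontgen _ heDencont heDen0
  have hGcont : ContinuousOn Gfun (Icc 0 t₀) := hcontgen _ hQcont hQ0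
  -- FTC
  have hFTC : ∫ s in (0:ℝ)..t₀, (-(2 * p) * Gfun s) = Efun t₀ - Efun 0 := by
    apply intervalIntegral.integral_eq_sub_of_hasDeriv_right_of_le ht₀ hEcont
    · intro s hs
      have h1 : 0 < s := hs.1
      have h2 : s < T := by rw [hT]; linarith [hs.2]
      have := hEderiv s h1 h2
      rw [hIBP s h1 (by linarith)] at this
      exact this.hasDerivWithinAt
    · apply ContinuousOn.intervalIntegrable
      rw [uIcc_of_le ht₀]
      exact (hGcont.const_smul (-(2*p))).congr (fun s _ => by simp [smul_eq_mul])
  -- the real-valued identity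
  have hreal : (1/2) * Efun t₀ + p * (∫ s in (0:ℝ)..t₀, Gfun s) = (1/2) * Efun 0 := by
    have h1 : ∫ s in (0:ℝ)..t₀, (-(2 * p) * Gfun s) =
        -(2 * p) * ∫ s in (0:ℝ)..t₀, Gfun s := intervalIntegral.integral_const_mul _ _
    rw [h1] at hFTC
    linarith [hFTC]
  -- nonnegativity of the various integrals
  have hEnn : ∀ s : ℝ, 0 ≤ Efun s := fun s => integral_nonneg (fun x => heDennn _)
  have hGnn : ∀ s : ℝ, 0 ≤ Gfun s := fun s => integral_nonneg (fun x => hQnn _)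
  have hGint : IntegrableOn Gfun (Icc 0 t₀) :=
    hGcont.integrableOn_compact isCompact_Icc
  have hInn : 0 ≤ ∫ s in (0:ℝ)..t₀, Gfun s :=
    intervalIntegral.integral_nonneg ht₀ (fun s _ => hGnn s)
  -- convert to the ENNReal statement
  have e1 : ∀ s : ℝ, 0 ≤ s → s ≤ T →
      (∫⁻ x : E3, ENNReal.ofReal (eDen v (x, s))) = ENNReal.ofReal (Efun s) := by
    intro s h1 h2
    rw [← ofReal_integral_eq_lintegral_ofReal (heDenint s h1 h2)
      (Filter.Eventually.of_forall fun x => heDennn _)]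
  have e2 : ∀ s : ℝ, 0 ≤ s → s ≤ T →
      (∫⁻ x : E3, ENNReal.ofReal (|pt u (x, s)| ^ (p - 1) * (pt v (x, s)) ^ 2))
        = ENNReal.ofReal (Gfun s) := by
    intro s h1 h2
    rw [← ofReal_integral_eq_lintegral_ofReal (hQint s h1 h2)
      (Filter.Eventually.of_forall fun x => hQnn _)]
  have e3 : (∫⁻ s in Icc (0:ℝ) t₀, ∫⁻ x : E3,
      ENNReal.ofReal (|pt u (x, s)| ^ (p - 1) * (pt v (x, s)) ^ 2))
        = ∫⁻ s in Icc (0:ℝ) t₀, ENNReal.ofReal (Gfun s) := by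
    apply setLIntegral_congr_fun_ae measurableSet_Icc
    exact Filter.Eventually.of_forall fun s hs =>
      e2 s hs.1 (le_trans hs.2 (by rw [hT]; linarith))
  have e4' : (∫⁻ s in Icc (0:ℝ) t₀, ENNReal.ofReal (Gfun s))
      = ENNReal.ofReal (∫ s in Icc (0:ℝ) t₀, Gfun s) := by
    rw [← ofReal_integral_eq_lintegral_ofReal hGint
      (Filter.Eventually.of_forall fun s => hGnn s)]
  have e5 : (∫ s in Icc (0:ℝ) t₀, Gfun s) = ∫ s in (0:ℝ)..t₀, Gfun s := by
    rw [MeasureTheory.integral_Icc_eq_integral_Ioc, ← intervalIntegral.integral_of_le ht₀]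
  rw [e1 t₀ ht₀ (by rw [hT]; linarith), e1 0 le_rfl (by rw [hT]; linarith), e3, e4', e5]
  have h12 : (1/2 : ℝ≥0∞) = ENNReal.ofReal (1/2) := by
    rw [ENNReal.ofReal_div_of_pos (by norm_num)]
    norm_num
  rw [h12, ← ENNReal.ofReal_mul (by norm_num : (0:ℝ) ≤ 1/2),
    ← ENNReal.ofReal_mul (by linarith : (0:ℝ) ≤ p),
    ← ENNReal.ofReal_add (mul_nonneg (by norm_num) (hEnn t₀)) (mul_nonneg (by linarith) hInn),
    ← ENNReal.ofReal_mul (by norm_num : (0:ℝ) ≤ 1/2)]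
  exact congrArg ENNReal.ofReal hreal
end
end

section
/- Let f : (0,∞) → ℝ be a C¹ function that vanishes outside a compact set. Then for every R > 0, R² f(R)² ≤ 2 (∫_R^∞ f(r)² r² dr)^{1/2} (∫_R^∞ f'(r)² r² dr)^{1/2}. Consequently, if U(x) = f(|x|) on ℝ³, then R|U(x)| ≤ C‖U‖_{H¹(|x|>R)} for |x| = R with an absolute constant C. -/
open MeasureTheory Set Real
open scoped ENNReal

noncomputable section

/-- Cauchy–Schwarz for set integrals of nonnegative functions. -/
lemma cs_aux {μ : Measure ℝ} [IsFiniteMeasure μ] {a b : ℝ → ℝ}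
    (ha : MemLp a 2 μ) (hb : MemLp b 2 μ)
    (ha0 : ∀ x, 0 ≤ a x) (hb0 : ∀ x, 0 ≤ b x) :
    ∫ x, a x * b x ∂μ ≤ Real.sqrt (∫ x, a x ^ 2 ∂μ) * Real.sqrt (∫ x, b x ^ 2 ∂μ) := by
  have hpq : (2:ℝ).HolderConjugate 2 := by rw [Real.holderConjugate_iff]; norm_num
  have h2 : (ENNReal.ofReal (2:ℝ)) = 2 := by
    rw [ENNReal.ofReal_ofNat]
  have := integral_mul_le_Lp_mul_Lq_of_nonneg hpq
    (Filter.Eventually.of_forall ha0) (Filter.Eventually.of_forall hb0)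
    (h2 ▸ ha) (h2 ▸ hb)
  have e1 : ∀ g : ℝ → ℝ, (∫ x, g x ^ (2:ℝ) ∂μ) = ∫ x, g x ^ 2 ∂μ := by
    intro g; congr 1; ext x; rw [← Real.rpow_natCast (g x) 2]; norm_num
  have e2 : ∀ y : ℝ, 0 ≤ y → y ^ (1/(2:ℝ)) = Real.sqrt y := by
    intro y hy; rw [Real.sqrt_eq_rpow]
  rw [e1, e1] at this
  have hA : 0 ≤ ∫ x, a x ^ 2 ∂μ := integral_nonneg fun x => sq_nonneg _
  have hB : 0 ≤ ∫ x, b x ^ 2 ∂μ := integral_nonneg fun x => sq_nonneg _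
  rwa [e2 _ hA, e2 _ hB] at this

/-- strong version of Strauss's radial lemma.  For a C¹ function `f` on
`(0,∞)` vanishing outside a compact set, `R² f(R)² ≤ 2 (∫_R^∞ f² r² dr)^{1/2}
(∫_R^∞ f'² r² dr)^{1/2}`, and consequently for the radial function `U(x) = f(|x|)` on ℝ³
one has `R |U| ≤ C ‖U‖_{H¹(|x|>R)}` (expressed through the radial integral formulas
`∫_{|x|>R} (U² + |∇U|²) dx = 4π ∫_R^∞ (f² + f'²) r² dr`). -/
theorem strong_strauss_radial_lemma :
    ∃ C > (0 : ℝ), ∀ f : ℝ → ℝ, ContDiffOn ℝ 1 f (Ioi 0) →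
      (∃ K : Set ℝ, IsCompact K ∧ ∀ r ∈ Ioi (0 : ℝ), r ∉ K → f r = 0) →
      ∀ R : ℝ, 0 < R →
        R ^ 2 * f R ^ 2
            ≤ 2 * Real.sqrt (∫ r in Ioi R, f r ^ 2 * r ^ 2) *
                Real.sqrt (∫ r in Ioi R, derivWithin f (Ioi 0) r ^ 2 * r ^ 2) ∧
        R * |f R|
            ≤ C * Real.sqrt
                (4 * π * ∫ r in Ioi R, (f r ^ 2 + derivWithin f (Ioi 0) r ^ 2) * r ^ 2) := by
  refine ⟨1, one_pos, ?_⟩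
  intro f hf ⟨K, hK, hK0⟩ R hR
  set f' := derivWithin f (Ioi 0) with hf'def
  -- choose b beyond the support and beyond R
  obtain ⟨M, hM⟩ := hK.isBounded.subset_ball 0
  set b : ℝ := max M (R + 1) with hbdef
  have hRb : R < b := lt_of_lt_of_le (by linarith) (le_max_right _ _)
  have hbpos : 0 < b := lt_trans hR hRb
  have hfb : ∀ x, b ≤ x → f x = 0 := by
    intro x hx
    refine hK0 x (lt_of_lt_of_le hbpos hx) fun hxK => ?_
    have := hM hxK
    rw [Metric.mem_ball, Real.dist_eq, sub_zero] at this
    have : x < M := lt_of_abs_lt this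
    have : M ≤ b := le_max_left _ _
    linarith
  -- basic regularity
  have hIcc : Icc R b ⊆ Ioi 0 := fun x hx => lt_of_lt_of_le hR hx.1
  have hfc : ContinuousOn f (Ioi 0) := hf.continuousOn
  have hf'c : ContinuousOn f' (Ioi 0) :=
    hf.continuousOn_derivWithin (uniqueDiffOn_Ioi 0) le_rfl
  have hderiv : ∀ x ∈ Ioi (0:ℝ), HasDerivAt f (f' x) x := by
    intro x hx
    have hdx : DifferentiableAt ℝ f x :=
      (hf.differentiableOn one_ne_zero x hx).differentiableAt (isOpen_Ioi.mem_nhds hx)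
    have : f' x = deriv f x := derivWithin_of_isOpen isOpen_Ioi hx
    rw [this]; exact hdx.hasDerivAt
  -- FTC on [R, b]
  set g' : ℝ → ℝ := fun x => 2 * x ^ 1 * f x ^ 2 + x ^ 2 * (2 * f x ^ 1 * f' x) with hg'def
  have hgderiv : ∀ x ∈ uIcc R b, HasDerivAt (fun r => r ^ 2 * f r ^ 2) (g' x) x := by
    intro x hx
    rw [uIcc_of_le hRb.le] at hx
    exact (hasDerivAt_pow 2 x).mul ((hderiv x (hIcc hx)).pow 2)
  have hg'cont : ContinuousOn g' (Icc R b) := by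
    have h1 : ContinuousOn f (Icc R b) := hfc.mono hIcc
    have h2 : ContinuousOn f' (Icc R b) := hf'c.mono hIcc
    fun_prop
  have hg'int : IntervalIntegrable g' volume R b :=
    (hg'cont.mono (by rw [uIcc_of_le hRb.le])).intervalIntegrable
  have hFTC : ∫ x in R..b, g' x = b ^ 2 * f b ^ 2 - R ^ 2 * f R ^ 2 :=
    intervalIntegral.integral_eq_sub_of_hasDerivAt hgderiv hg'int
  rw [hfb b le_rfl] at hFTC
  have key : R ^ 2 * f R ^ 2 = ∫ x in R..b, (-g' x) := by
    rw [intervalIntegral.integral_neg, hFTC]; ring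
  -- bound by the integral of 2 |x|² |f| |f'|
  set h : ℝ → ℝ := fun x => (|f x| * |x|) * (|f' x| * |x|) with hhdef
  have hhcont : ContinuousOn (fun x => 2 * h x) (Icc R b) := by
    have h1 : ContinuousOn f (Icc R b) := hfc.mono hIcc
    have h2 : ContinuousOn f' (Icc R b) := hf'c.mono hIcc
    fun_prop
  have hhint : IntervalIntegrable (fun x => 2 * h x) volume R b :=
    (hhcont.mono (by rw [uIcc_of_le hRb.le])).intervalIntegrable
  have hmono : ∫ x in R..b, (-g' x) ≤ ∫ x in R..b, 2 * h x := by
    refine intervalIntegral.integral_mono_on hRb.le hg'int.neg hhint fun x hx => ?_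
    have hx0 : 0 < x := lt_of_lt_of_le hR hx.1
    have habs : |x| = x := abs_of_pos hx0
    have h1 : 0 ≤ 2 * x ^ 1 * f x ^ 2 := by positivity
    have h2 : -(x ^ 2 * (2 * f x ^ 1 * f' x)) ≤ 2 * h x := by
      rw [hhdef]
      simp only [habs]
      calc -(x ^ 2 * (2 * f x ^ 1 * f' x)) = x ^ 2 * (2 * (-(f x * f' x))) := by ring
        _ ≤ x ^ 2 * (2 * |f x * f' x|) := by gcongr; exact neg_le_abs _
        _ = 2 * ((|f x| * x) * (|f' x| * x)) := by rw [abs_mul]; ring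
    rw [hg'def]
    simp only
    linarith
  -- pass to set integrals over Ioc R b
  have hfin := (Measure.restrict_apply_univ (Ioc R b) (μ := volume)) ▸
    (measure_Ioc_lt_top : volume (Ioc R b) < ⊤)
  haveI : IsFiniteMeasure (volume.restrict (Ioc R b)) := ⟨hfin⟩
  have memaux : ∀ u : ℝ → ℝ, ContinuousOn u (Ioi 0) →
      MemLp (fun x => |u x| * |x|) 2 (volume.restrict (Ioc R b)) := by
    intro u hu
    have hcont : ContinuousOn (fun x => |u x| * |x|) (Icc R b) := by
      have := hu.mono hIcc; fun_prop
    have hmeasu : AEStronglyMeasurable (fun x => |u x| * |x|) (volume.restrict (Ioc R b)) :=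
      (hcont.mono Ioc_subset_Icc_self).aestronglyMeasurable measurableSet_Ioc
    obtain ⟨Cb, hCb⟩ := isCompact_Icc.exists_bound_of_continuousOn hcont
    refine MemLp.of_bound hmeasu Cb ?_
    filter_upwards [ae_restrict_mem measurableSet_Ioc] with x hx
    exact hCb x (Ioc_subset_Icc_self hx)
  -- Cauchy–Schwarz
  have hcs := cs_aux (memaux f hfc) (memaux f' hf'c)
    (fun x => by positivity) (fun x => by positivity)
  have sqeq : ∀ u : ℝ → ℝ,
      (∫ x in Ioc R b, (|u x| * |x|) ^ 2) = ∫ x in Ioc R b, u x ^ 2 * x ^ 2 := by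
    intro u; congr 1; ext x; rw [mul_pow, sq_abs, sq_abs]
  rw [sqeq, sqeq] at hcs
  -- extend set integrals from Ioc R b to Ioi R
  have hsplit : ∀ u : ℝ → ℝ, ContinuousOn u (Ioi 0) → (∀ x, b < x → u x = 0) →
      IntegrableOn u (Ioi R) ∧ (∫ x in Ioi R, u x) = ∫ x in Ioc R b, u x := by
    intro u hu hub
    have h1 : IntegrableOn u (Ioc R b) :=
      ((hu.mono hIcc).integrableOn_Icc).mono_set Ioc_subset_Icc_self
    have hzero : EqOn u (fun _ => (0:ℝ)) (Ioi b) := fun x hx => hub x hx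
    have h2 : IntegrableOn u (Ioi b) :=
      (integrableOn_congr_fun hzero measurableSet_Ioi).mpr integrableOn_zero
    have h3 : (∫ x in Ioi b, u x) = 0 := by
      rw [setIntegral_congr_fun measurableSet_Ioi hzero]; simp
    have hunion : Ioc R b ∪ Ioi b = Ioi R := Ioc_union_Ioi_eq_Ioi hRb.le
    have hdisj : Disjoint (Ioc R b) (Ioi b) := by
      rw [Set.disjoint_left]; intro x hx hx'; exact absurd hx.2 (not_le.mpr hx')
    refine ⟨?_, ?_⟩
    · rw [← hunion]; exact h1.union h2
    · rw [← hunion, setIntegral_union hdisj measurableSet_Ioi h1 h2, h3, add_zero]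
  have hf'zero : ∀ x, b < x → f' x = 0 := by
    intro x hx
    have hev : f =ᶠ[nhds x] fun _ => (0:ℝ) := by
      filter_upwards [Ioi_mem_nhds hx] with y hy
      exact hfb y (le_of_lt hy)
    have hdx : deriv f x = deriv (fun _ => (0:ℝ)) x := hev.deriv_eq
    rw [hf'def, derivWithin_of_isOpen isOpen_Ioi (lt_trans hbpos hx : (0:ℝ) < x), hdx,
      deriv_const]
  have hcF : ContinuousOn (fun x => f x ^ 2 * x ^ 2) (Ioi 0) := by fun_prop
  have hcF' : ContinuousOn (fun x => f' x ^ 2 * x ^ 2) (Ioi 0) := by fun_prop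
  obtain ⟨hintF, heqF⟩ := hsplit _ hcF fun x hx => by rw [hfb x hx.le]; ring
  obtain ⟨hintF', heqF'⟩ := hsplit _ hcF' fun x hx => by rw [hf'zero x hx]; ring
  -- the first inequality
  have hioc : ∫ x in R..b, 2 * h x = 2 * ∫ x in Ioc R b, h x := by
    rw [intervalIntegral.integral_of_le hRb.le, integral_const_mul]
  have first : R ^ 2 * f R ^ 2
      ≤ 2 * Real.sqrt (∫ r in Ioi R, f r ^ 2 * r ^ 2) *
        Real.sqrt (∫ r in Ioi R, f' r ^ 2 * r ^ 2) := by
    rw [heqF, heqF']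
    calc R ^ 2 * f R ^ 2 = ∫ x in R..b, (-g' x) := key
      _ ≤ ∫ x in R..b, 2 * h x := hmono
      _ = 2 * ∫ x in Ioc R b, h x := hioc
      _ ≤ 2 * (Real.sqrt (∫ x in Ioc R b, f x ^ 2 * x ^ 2) *
            Real.sqrt (∫ x in Ioc R b, f' x ^ 2 * x ^ 2)) := by
          exact mul_le_mul_of_nonneg_left hcs (by norm_num)
      _ = _ := by ring
  refine ⟨first, ?_⟩
  -- the second inequality
  set A := ∫ r in Ioi R, f r ^ 2 * r ^ 2 with hAdef
  set B := ∫ r in Ioi R, f' r ^ 2 * r ^ 2 with hBdef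
  have hA0 : 0 ≤ A := integral_nonneg fun x => by positivity
  have hB0 : 0 ≤ B := integral_nonneg fun x => by positivity
  have hsum : (∫ r in Ioi R, (f r ^ 2 + f' r ^ 2) * r ^ 2) = A + B := by
    rw [hAdef, hBdef, ← integral_add hintF hintF']
    congr 1; ext x; ring
  have hAB : R ^ 2 * f R ^ 2 ≤ A + B := by
    calc R ^ 2 * f R ^ 2 ≤ 2 * Real.sqrt A * Real.sqrt B := first
      _ ≤ Real.sqrt A ^ 2 + Real.sqrt B ^ 2 := two_mul_le_add_sq _ _
      _ = A + B := by rw [Real.sq_sqrt hA0, Real.sq_sqrt hB0]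
  have hsum0 : 0 ≤ A + B := by linarith
  have hstep : R * |f R| ≤ Real.sqrt (A + B) := by
    have hx0 : 0 ≤ R * |f R| := mul_nonneg hR.le (abs_nonneg _)
    refine (Real.le_sqrt hx0 hsum0).mpr ?_
    calc (R * |f R|) ^ 2 = R ^ 2 * f R ^ 2 := by rw [mul_pow, sq_abs]
      _ ≤ A + B := hAB
  have hpi : (1:ℝ) ≤ 4 * π := by
    have := Real.pi_gt_three; linarith
  calc R * |f R| ≤ Real.sqrt (A + B) := hstep
    _ ≤ Real.sqrt (4 * π * (A + B)) := by
        apply Real.sqrt_le_sqrt; nlinarith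
    _ = 1 * Real.sqrt (4 * π * ∫ r in Ioi R, (f r ^ 2 + f' r ^ 2) * r ^ 2) := by
        rw [hsum, one_mul]
end
end

section
/- Let I ⊆ ℝ be an interval, let X₊, X₋ : ℝ × I → ℝ be C¹ and let a : ℝ × I → ℝ be continuous with a(x,t) ≥ 0 everywhere. Suppose (∂ₜ − ∂ₓ)X₊ + a(X₊ + X₋) = 0 and (∂ₜ + ∂ₓ)X₋ + a(X₊ + X₋) = 0 pointwise on ℝ × I. Then for every natural number k ≥ 1, the pointwise differential inequality ∂ₜ(X₊^{2k} + X₋^{2k}) + ∂ₓ(X₋^{2k} − X₊^{2k}) ≤ 0 holds on ℝ × I. -/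
open MeasureTheory Set Real
open scoped ENNReal

noncomputable section

/-- Partial derivative in the first (space) variable of a function on ℝ × ℝ. -/
def d1 (g : ℝ × ℝ → ℝ) : ℝ × ℝ → ℝ := fun z => fderiv ℝ g z ((1 : ℝ), (0 : ℝ))

/-- Partial derivative in the second (time) variable of a function on ℝ × ℝ. -/
def d2 (g : ℝ × ℝ → ℝ) : ℝ × ℝ → ℝ := fun z => fderiv ℝ g z ((0 : ℝ), (1 : ℝ))

lemma odd_key (n : ℕ) (hn : Odd n) (x y : ℝ) : 0 ≤ (x + y) * (x ^ n + y ^ n) := by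
  rcases le_total (-y) x with h | h
  · have h1 : (-y) ^ n ≤ x ^ n := hn.strictMono_pow.monotone h
    rw [hn.neg_pow] at h1
    have hxy : 0 ≤ x + y := by linarith
    nlinarith
  · have h1 : x ^ n ≤ (-y) ^ n := hn.strictMono_pow.monotone h
    rw [hn.neg_pow] at h1
    have hxy : x + y ≤ 0 := by linarith
    nlinarith

/-- the pointwise differential inequality
`∂ₜ(X₊^{2k} + X₋^{2k}) + ∂ₓ(X₋^{2k} − X₊^{2k}) ≤ 0` for the damped transport system. -/
theorem pointwise_differential_inequality
    (I : Set ℝ) (hI : I.OrdConnected)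
    (Xp Xm a : ℝ × ℝ → ℝ)
    (hXp : ContDiff ℝ 1 Xp) (hXm : ContDiff ℝ 1 Xm) (ha : Continuous a)
    (hann : ∀ z : ℝ × ℝ, z.2 ∈ I → 0 ≤ a z)
    (heqp : ∀ z : ℝ × ℝ, z.2 ∈ I → d2 Xp z - d1 Xp z + a z * (Xp z + Xm z) = 0)
    (heqm : ∀ z : ℝ × ℝ, z.2 ∈ I → d2 Xm z + d1 Xm z + a z * (Xp z + Xm z) = 0) :
    ∀ k : ℕ, 1 ≤ k → ∀ z : ℝ × ℝ, z.2 ∈ I →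
      d2 (fun w => Xp w ^ (2 * k) + Xm w ^ (2 * k)) z
        + d1 (fun w => Xm w ^ (2 * k) - Xp w ^ (2 * k)) z ≤ 0 := by
  intro k hk z hz
  set n := 2 * k with hn
  have hp : HasFDerivAt Xp (fderiv ℝ Xp z) z :=
    (hXp.differentiable one_ne_zero z).hasFDerivAt
  have hm : HasFDerivAt Xm (fderiv ℝ Xm z) z :=
    (hXm.differentiable one_ne_zero z).hasFDerivAt
  have hpn : HasFDerivAt (fun w => Xp w ^ n)
      (((n : ℝ) * Xp z ^ (n - 1)) • fderiv ℝ Xp z) z :=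
    (hasDerivAt_pow n (Xp z)).comp_hasFDerivAt z hp
  have hmn : HasFDerivAt (fun w => Xm w ^ n)
      (((n : ℝ) * Xm z ^ (n - 1)) • fderiv ℝ Xm z) z :=
    (hasDerivAt_pow n (Xm z)).comp_hasFDerivAt z hm
  have h1 : HasFDerivAt (fun w => Xp w ^ n + Xm w ^ n)
      (((n : ℝ) * Xp z ^ (n - 1)) • fderiv ℝ Xp z
        + ((n : ℝ) * Xm z ^ (n - 1)) • fderiv ℝ Xm z) z := hpn.add hmn
  have h2 : HasFDerivAt (fun w => Xm w ^ n - Xp w ^ n)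
      (((n : ℝ) * Xm z ^ (n - 1)) • fderiv ℝ Xm z
        - ((n : ℝ) * Xp z ^ (n - 1)) • fderiv ℝ Xp z) z := hmn.sub hpn
  have e1 : d2 (fun w => Xp w ^ n + Xm w ^ n) z
      = (n : ℝ) * Xp z ^ (n - 1) * d2 Xp z + (n : ℝ) * Xm z ^ (n - 1) * d2 Xm z := by
    simp only [d2, h1.fderiv, ContinuousLinearMap.add_apply,
      ContinuousLinearMap.coe_smul', Pi.smul_apply, smul_eq_mul]
  have e2 : d1 (fun w => Xm w ^ n - Xp w ^ n) z
      = (n : ℝ) * Xm z ^ (n - 1) * d1 Xm z - (n : ℝ) * Xp z ^ (n - 1) * d1 Xp z := by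
    simp only [d1, h2.fderiv, ContinuousLinearMap.sub_apply,
      ContinuousLinearMap.coe_smul', Pi.smul_apply, smul_eq_mul]
  rw [e1, e2]
  have hep := heqp z hz
  have hem := heqm z hz
  have hodd : Odd (n - 1) := ⟨k - 1, by omega⟩
  have hkey : 0 ≤ (Xp z + Xm z) * (Xp z ^ (n - 1) + Xm z ^ (n - 1)) :=
    odd_key _ hodd _ _
  have han : 0 ≤ a z := hann z hz
  have key2 : (n : ℝ) * Xp z ^ (n - 1) * d2 Xp z + (n : ℝ) * Xm z ^ (n - 1) * d2 Xm z
      + ((n : ℝ) * Xm z ^ (n - 1) * d1 Xm z - (n : ℝ) * Xp z ^ (n - 1) * d1 Xp z)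
      = -((n : ℝ) * (a z * ((Xp z + Xm z) * (Xp z ^ (n - 1) + Xm z ^ (n - 1))))) := by
    linear_combination ((n : ℝ) * Xp z ^ (n - 1)) * hep + ((n : ℝ) * Xm z ^ (n - 1)) * hem
  rw [key2, neg_nonpos]
  exact mul_nonneg (Nat.cast_nonneg n) (mul_nonneg han hkey)
end
end

section
/- Let X₊, X₋ : [0,∞) × [0,∞) → ℝ be C¹ and let a : [0,∞) × [0,∞) → ℝ be continuous with a(r,t) ≥ 0 everywhere. Suppose (∂ₜ − ∂ᵣ)X₊ + a(X₊ + X₋) = 0 and (∂ₜ + ∂ᵣ)X₋ + a(X₊ + X₋) = 0 pointwise, that X₊(0,t) + X₋(0,t) = 0 for all t ≥ 0, and that for every T > 0 there is R > 0 with X₊(r,t) = X₋(r,t) = 0 whenever r ≥ R and 0 ≤ t ≤ T. Then for every natural number k ≥ 1 and all 0 ≤ t₁ ≤ t₂, ∫₀^∞ (X₊(r,t₂)^{2k} + X₋(r,t₂)^{2k}) dr ≤ ∫₀^∞ (X₊(r,t₁)^{2k} + X₋(r,t₁)^{2k}) dr. -/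
open MeasureTheory Set Real
open scoped ENNReal

noncomputable section

/-- Derivative in the time variable. -/
lemma hasDerivAt_d2 (g : ℝ × ℝ → ℝ) (hg : ContDiff ℝ 1 g) (r t : ℝ) :
    HasDerivAt (fun s => g (r, s)) (d2 g (r, t)) t := by
  have h1 : HasDerivAt (fun s : ℝ => ((r, s) : ℝ × ℝ)) ((0 : ℝ), (1 : ℝ)) t :=
    (hasDerivAt_const t r).prodMk (hasDerivAt_id t)
  exact (hg.differentiable one_ne_zero (r, t)).hasFDerivAt.comp_hasDerivAt t h1

/-- Derivative in the space variable. -/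
lemma hasDerivAt_d1 (g : ℝ × ℝ → ℝ) (hg : ContDiff ℝ 1 g) (r t : ℝ) :
    HasDerivAt (fun s => g (s, t)) (d1 g (r, t)) r := by
  have h1 : HasDerivAt (fun s : ℝ => ((s, t) : ℝ × ℝ)) ((1 : ℝ), (0 : ℝ)) r :=
    (hasDerivAt_id r).prodMk (hasDerivAt_const r t)
  exact (hg.differentiable one_ne_zero (r, t)).hasFDerivAt.comp_hasDerivAt r h1

lemma continuous_d1 (g : ℝ × ℝ → ℝ) (hg : ContDiff ℝ 1 g) : Continuous (d1 g) :=
  (hg.continuous_fderiv one_ne_zero).clm_apply continuous_const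

lemma continuous_d2 (g : ℝ × ℝ → ℝ) (hg : ContDiff ℝ 1 g) : Continuous (d2 g) :=
  (hg.continuous_fderiv one_ne_zero).clm_apply continuous_const

/-- The key sign fact: `(x + y) * (x^(2k-1) + y^(2k-1)) ≥ 0`. -/
lemma key_sign (k : ℕ) (hk : 1 ≤ k) (x y : ℝ) :
    0 ≤ (x + y) * (x ^ (2 * k - 1) + y ^ (2 * k - 1)) := by
  have hodd : Odd (2 * k - 1) := ⟨k - 1, by omega⟩
  have hmono : Monotone fun u : ℝ => u ^ (2 * k - 1) := hodd.strictMono_pow.monotone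
  have hneg : (-y) ^ (2 * k - 1) = -(y ^ (2 * k - 1)) := hodd.neg_pow y
  rcases le_total (-y) x with h | h
  · have h1 : 0 ≤ x + y := by linarith
    have h2 : (-y) ^ (2 * k - 1) ≤ x ^ (2 * k - 1) := hmono h
    have h3 : 0 ≤ x ^ (2 * k - 1) + y ^ (2 * k - 1) := by rw [hneg] at h2; linarith
    exact mul_nonneg h1 h3
  · have h1 : x + y ≤ 0 := by linarith
    have h2 : x ^ (2 * k - 1) ≤ (-y) ^ (2 * k - 1) := hmono h
    have h3 : x ^ (2 * k - 1) + y ^ (2 * k - 1) ≤ 0 := by rw [hneg] at h2; linarith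
    nlinarith

/-- monotonicity of the `L^{2k}` integrals on the half line for the
damped transport system with reflecting boundary condition at `r = 0`. -/
theorem L2k_monotonicity_half_line
    (Xp Xm a : ℝ × ℝ → ℝ)
    (hXp : ContDiff ℝ 1 Xp) (hXm : ContDiff ℝ 1 Xm) (ha : Continuous a)
    (hann : ∀ z : ℝ × ℝ, 0 ≤ z.1 → 0 ≤ z.2 → 0 ≤ a z)
    (heqp : ∀ z : ℝ × ℝ, 0 ≤ z.1 → 0 ≤ z.2 →
      d2 Xp z - d1 Xp z + a z * (Xp z + Xm z) = 0)
    (heqm : ∀ z : ℝ × ℝ, 0 ≤ z.1 → 0 ≤ z.2 →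
      d2 Xm z + d1 Xm z + a z * (Xp z + Xm z) = 0)
    (hbd : ∀ t : ℝ, 0 ≤ t → Xp (0, t) + Xm (0, t) = 0)
    (hsupp : ∀ T : ℝ, 0 < T → ∃ R > (0 : ℝ), ∀ r t : ℝ,
      R ≤ r → 0 ≤ t → t ≤ T → Xp (r, t) = 0 ∧ Xm (r, t) = 0) :
    ∀ k : ℕ, 1 ≤ k → ∀ t₁ t₂ : ℝ, 0 ≤ t₁ → t₁ ≤ t₂ →
      (∫⁻ r in Ioi (0 : ℝ), ENNReal.ofReal (Xp (r, t₂) ^ (2 * k) + Xm (r, t₂) ^ (2 * k)))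
        ≤ ∫⁻ r in Ioi (0 : ℝ), ENNReal.ofReal (Xp (r, t₁) ^ (2 * k) + Xm (r, t₁) ^ (2 * k)) := by
  intro k hk t₁ t₂ ht₁ ht₁₂
  have ht₂ : (0 : ℝ) ≤ t₂ := le_trans ht₁ ht₁₂
  obtain ⟨R, hR, hRsupp⟩ := hsupp (t₂ + 1) (by linarith)
  set n := 2 * k with hn
  have hn2 : 2 ≤ n := by omega
  -- key functions
  set G : ℝ × ℝ → ℝ := fun z => Xp z ^ n + Xm z ^ n with hG
  set ψ : ℝ × ℝ → ℝ := fun z =>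
    (n : ℝ) * Xp z ^ (n - 1) * d2 Xp z + (n : ℝ) * Xm z ^ (n - 1) * d2 Xm z with hψ
  set φ' : ℝ × ℝ → ℝ := fun z =>
    (n : ℝ) * Xp z ^ (n - 1) * d1 Xp z - (n : ℝ) * Xm z ^ (n - 1) * d1 Xm z with hφ'
  set D : ℝ × ℝ → ℝ := fun z =>
    (n : ℝ) * a z * ((Xp z + Xm z) * (Xp z ^ (n - 1) + Xm z ^ (n - 1))) with hD
  -- continuity
  have hGc : Continuous G := (hXp.continuous.pow n).add (hXm.continuous.pow n)
  have hψc : Continuous ψ := by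
    exact ((continuous_const.mul (hXp.continuous.pow _)).mul (continuous_d2 Xp hXp)).add
      ((continuous_const.mul (hXm.continuous.pow _)).mul (continuous_d2 Xm hXm))
  have hφ'c : Continuous φ' := by
    exact ((continuous_const.mul (hXp.continuous.pow _)).mul (continuous_d1 Xp hXp)).sub
      ((continuous_const.mul (hXm.continuous.pow _)).mul (continuous_d1 Xm hXm))
  have hDc : Continuous D := by
    exact (continuous_const.mul ha).mul ((hXp.continuous.add hXm.continuous).mul
      ((hXp.continuous.pow _).add (hXm.continuous.pow _)))
  -- time derivative of G
  have hGt : ∀ r t : ℝ, HasDerivAt (fun s => G (r, s)) (ψ (r, t)) t := by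
    intro r t
    exact ((hasDerivAt_d2 Xp hXp r t).pow n).add ((hasDerivAt_d2 Xm hXm r t).pow n)
  -- FTC in time
  have step1 : ∀ r : ℝ, G (r, t₂) - G (r, t₁) = ∫ t in t₁..t₂, ψ (r, t) := by
    intro r
    refine (intervalIntegral.integral_eq_sub_of_hasDerivAt (fun t _ => hGt r t) ?_).symm
    exact (hψc.comp (continuous_const.prodMk continuous_id)).intervalIntegrable t₁ t₂
  -- Fubini
  have hFub : (∫ r in Ioc (0 : ℝ) R, ∫ t in Ioc t₁ t₂, ψ (r, t))
      = ∫ t in Ioc t₁ t₂, ∫ r in Ioc (0 : ℝ) R, ψ (r, t) := by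
    have hint : IntegrableOn (fun z : ℝ × ℝ => ψ z) (Ioc (0 : ℝ) R ×ˢ Ioc t₁ t₂) :=
      (hψc.continuousOn.integrableOn_compact (isCompact_Icc.prod isCompact_Icc)).mono_set
        (prod_mono Ioc_subset_Icc_self Ioc_subset_Icc_self)
    have h := MeasureTheory.integral_integral_swap (f := fun r t => ψ (r, t))
      (μ := volume.restrict (Ioc (0 : ℝ) R)) (ν := volume.restrict (Ioc t₁ t₂)) ?_
    · exact h
    · rw [Measure.prod_restrict]; exact hint
  -- inner spatial integral is nonpositive
  have step3 : ∀ t : ℝ, t₁ ≤ t → t ≤ t₂ → (∫ r in Ioc (0 : ℝ) R, ψ (r, t)) ≤ 0 := by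
    intro t htl htr
    have ht0 : (0 : ℝ) ≤ t := le_trans ht₁ htl
    -- FTC in space for φ = Xp^n - Xm^n
    have hFTC : (∫ r in (0 : ℝ)..R, φ' (r, t)) = (Xp (R, t) ^ n - Xm (R, t) ^ n)
        - (Xp (0, t) ^ n - Xm (0, t) ^ n) := by
      apply intervalIntegral.integral_eq_sub_of_hasDerivAt
        (f := fun r => Xp (r, t) ^ n - Xm (r, t) ^ n)
      · intro r _
        exact ((hasDerivAt_d1 Xp hXp r t).pow n).sub ((hasDerivAt_d1 Xm hXm r t).pow n)
      · exact (hφ'c.comp (continuous_id.prodMk continuous_const)).intervalIntegrable 0 R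
    have hXR := hRsupp R t le_rfl ht0 (by linarith)
    have hX0 : Xm (0, t) = -Xp (0, t) := by have := hbd t ht0; linarith
    have hbval : (∫ r in (0 : ℝ)..R, φ' (r, t)) = 0 := by
      rw [hFTC, hXR.1, hXR.2, hX0]
      have : (-Xp (0, t)) ^ n = Xp (0, t) ^ n := (even_two_mul k).neg_pow _
      rw [this]
      ring
    have hφ'0 : (∫ r in Ioc (0 : ℝ) R, φ' (r, t)) = 0 := by
      rw [← intervalIntegral.integral_of_le hR.le]; exact hbval
    -- pointwise identity ψ = φ' - D on the region
    have hpt : ∀ r ∈ Ioc (0 : ℝ) R, ψ (r, t) = φ' (r, t) - D (r, t) := by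
      intro r hr
      have hr0 : (0 : ℝ) ≤ r := hr.1.le
      have e1 := heqp (r, t) hr0 ht0
      have e2 := heqm (r, t) hr0 ht0
      have e1' : d2 Xp (r, t) = d1 Xp (r, t) - a (r, t) * (Xp (r, t) + Xm (r, t)) := by
        linarith
      have e2' : d2 Xm (r, t) = -d1 Xm (r, t) - a (r, t) * (Xp (r, t) + Xm (r, t)) := by
        linarith
      simp only [hψ, hφ', hD, e1', e2']
      ring
    have hcongr : (∫ r in Ioc (0 : ℝ) R, ψ (r, t))
        = ∫ r in Ioc (0 : ℝ) R, (φ' (r, t) - D (r, t)) :=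
      setIntegral_congr_fun measurableSet_Ioc hpt
    have hφ'int : IntegrableOn (fun r => φ' (r, t)) (Ioc (0 : ℝ) R) :=
      (hφ'c.comp (continuous_id.prodMk continuous_const)).integrableOn_Ioc
    have hDint : IntegrableOn (fun r => D (r, t)) (Ioc (0 : ℝ) R) :=
      (hDc.comp (continuous_id.prodMk continuous_const)).integrableOn_Ioc
    have hDnn : (0 : ℝ) ≤ ∫ r in Ioc (0 : ℝ) R, D (r, t) := by
      apply setIntegral_nonneg measurableSet_Ioc
      intro r hr
      have hr0 : (0 : ℝ) ≤ r := hr.1.le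
      exact mul_nonneg (mul_nonneg (by positivity) (hann (r, t) hr0 ht0))
        (key_sign k hk _ _)
    rw [hcongr, integral_sub hφ'int hDint, hφ'0]
    linarith
  -- combine: the real integrals over Ioc 0 R are monotone
  have hGint : ∀ t : ℝ, IntegrableOn (fun r => G (r, t)) (Ioc (0 : ℝ) R) := fun t =>
    (hGc.comp (continuous_id.prodMk continuous_const)).integrableOn_Ioc
  have hmain : (∫ r in Ioc (0 : ℝ) R, G (r, t₂)) ≤ ∫ r in Ioc (0 : ℝ) R, G (r, t₁) := by
    have hdiff : (∫ r in Ioc (0 : ℝ) R, G (r, t₂)) - (∫ r in Ioc (0 : ℝ) R, G (r, t₁))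
        = ∫ r in Ioc (0 : ℝ) R, (G (r, t₂) - G (r, t₁)) :=
      (integral_sub (hGint t₂) (hGint t₁)).symm
    have h1 : (∫ r in Ioc (0 : ℝ) R, (G (r, t₂) - G (r, t₁)))
        = ∫ r in Ioc (0 : ℝ) R, ∫ t in Ioc t₁ t₂, ψ (r, t) := by
      apply setIntegral_congr_fun measurableSet_Ioc
      intro r _
      show G (r, t₂) - G (r, t₁) = ∫ t in Ioc t₁ t₂, ψ (r, t)
      rw [step1 r, intervalIntegral.integral_of_le ht₁₂]
    have h2 : (∫ t in Ioc t₁ t₂, ∫ r in Ioc (0 : ℝ) R, ψ (r, t)) ≤ 0 := by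
      apply setIntegral_nonpos measurableSet_Ioc
      intro t ht
      exact step3 t ht.1.le ht.2
    have : (∫ r in Ioc (0 : ℝ) R, G (r, t₂)) - (∫ r in Ioc (0 : ℝ) R, G (r, t₁)) ≤ 0 := by
      rw [hdiff, h1, hFub]; exact h2
    linarith
  -- convert the lintegrals
  have hGnn : ∀ z : ℝ × ℝ, 0 ≤ G z := fun z =>
    add_nonneg ((even_two_mul k).pow_nonneg _) ((even_two_mul k).pow_nonneg _)
  have hconv : ∀ t : ℝ, 0 ≤ t → t ≤ t₂ →
      (∫⁻ r in Ioi (0 : ℝ), ENNReal.ofReal (Xp (r, t) ^ (2 * k) + Xm (r, t) ^ (2 * k)))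
        = ENNReal.ofReal (∫ r in Ioc (0 : ℝ) R, G (r, t)) := by
    intro t ht0 htt₂
    have hsplit : Ioi (0 : ℝ) = Ioc (0 : ℝ) R ∪ Ioi R := (Ioc_union_Ioi_eq_Ioi hR.le).symm
    have hzero : (∫⁻ r in Ioi R, ENNReal.ofReal (Xp (r, t) ^ (2 * k) + Xm (r, t) ^ (2 * k))) = 0 := by
      rw [setLIntegral_congr_fun measurableSet_Ioi
        (fun r (hr : r ∈ Ioi R) => ?_), lintegral_zero]
      have h := hRsupp r t (le_of_lt hr) ht0 (by linarith)
      rw [h.1, h.2]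
      simp [zero_pow (by omega : 2 * k ≠ 0)]
    rw [hsplit, lintegral_union measurableSet_Ioi Ioc_disjoint_Ioi_same, hzero, add_zero]
    rw [← ofReal_integral_eq_lintegral_ofReal (hGint t)
      (Filter.Eventually.of_forall (fun r => hGnn (r, t)))]
  rw [hconv t₂ ht₂ le_rfl, hconv t₁ ht₁ ht₁₂]
  exact ENNReal.ofReal_le_ofReal hmain
end
end

section
/- Let p ≥ 3 be a real number and let u : ℝ³ × [0,∞) → ℝ be a C³ solution of ∂ₜ²u − Δu + |∂ₜu|^{p−1}∂ₜu = 0 that is radially symmetric in x and spatially compactly supported on compact time intervals, with radial profile f(r,t) = u(r e₁, t). Define X₊(r,t) = (∂ₜ + ∂ᵣ)(r ∂ₜf(r,t)) and X₋(r,t) = (∂ₜ − ∂ᵣ)(r ∂ₜf(r,t)). Then for all t ≥ 0, max( sup_{r>0}|X₊(r,t)|, sup_{r>0}|X₋(r,t)| ) ≤ max( sup_{r>0}|X₊(r,0)|, sup_{r>0}|X₋(r,0)| ). -/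
open MeasureTheory Set Real
open scoped ENNReal

noncomputable section

/-- A fixed unit vector in ℝ³. -/
def e1 : E3 := EuclideanSpace.single 0 1

/-- The radial profile `f(r, t) = u(r e₁, t)` of a function on ℝ³ × ℝ. -/
def prof (u : E3 × ℝ → ℝ) : ℝ × ℝ → ℝ := fun z => u (z.1 • e1, z.2)

/-- `X₊(r,t) = (∂ₜ + ∂ᵣ)(r ∂ₜ f(r,t))` for the radial profile `f` of `u`. -/
def Xplus (u : E3 × ℝ → ℝ) : ℝ × ℝ → ℝ := fun z =>
  d2 (fun w : ℝ × ℝ => w.1 * d2 (prof u) w) z + d1 (fun w : ℝ × ℝ => w.1 * d2 (prof u) w) z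

/-- `X₋(r,t) = (∂ₜ − ∂ᵣ)(r ∂ₜ f(r,t))` for the radial profile `f` of `u`. -/
def Xminus (u : E3 × ℝ → ℝ) : ℝ × ℝ → ℝ := fun z =>
  d2 (fun w : ℝ × ℝ => w.1 * d2 (prof u) w) z - d1 (fun w : ℝ × ℝ => w.1 * d2 (prof u) w) z

lemma cd_apply {E : Type*} [NormedAddCommGroup E] [NormedSpace ℝ E] {g : E → ℝ}
    {n m : WithTop ℕ∞} (hg : ContDiff ℝ n g) (h : m + 1 ≤ n) (v : E) :
    ContDiff ℝ m (fun z => fderiv ℝ g z v) :=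
  (hg.fderiv_right h).clm_apply contDiff_const

lemma hasDerivAt_slice1 {G : ℝ × ℝ → ℝ} {a b : ℝ} (hG : DifferentiableAt ℝ G (a, b)) :
    HasDerivAt (fun r => G (r, b)) (d1 G (a, b)) a := by
  have h1 : HasDerivAt (fun r : ℝ => (r, b)) ((1 : ℝ), (0 : ℝ)) a := by
    simpa using (hasDerivAt_id a).prodMk (hasDerivAt_const a b)
  exact hG.hasFDerivAt.comp_hasDerivAt a h1

lemma norm_e1 : ‖e1‖ = 1 := by
  simp [e1, EuclideanSpace.norm_single]

lemma hasDerivAt_slice2 {G : ℝ × ℝ → ℝ} {a b : ℝ} (hG : DifferentiableAt ℝ G (a, b)) :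
    HasDerivAt (fun s => G (a, s)) (d2 G (a, b)) b := by
  have h1 : HasDerivAt (fun s : ℝ => (a, s)) ((0 : ℝ), (1 : ℝ)) b := by
    simpa using (hasDerivAt_const b a).prodMk (hasDerivAt_id b)
  exact hG.hasFDerivAt.comp_hasDerivAt b h1

lemma d1_d2_comm {g : ℝ × ℝ → ℝ} (hg : ContDiff ℝ 2 g) (z : ℝ × ℝ) :
    d1 (d2 g) z = d2 (d1 g) z := by
  have hsym : IsSymmSndFDerivAt ℝ g z := (hg.contDiffAt).isSymmSndFDerivAt (by norm_num)
  have hf' : DifferentiableAt ℝ (fderiv ℝ g) z :=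
    ((hg.fderiv_right (m := 1) (by norm_num)).differentiable (by norm_num)).differentiableAt
  have e1 : ∀ v w : ℝ × ℝ, fderiv ℝ (fun y => fderiv ℝ g y v) z w
      = fderiv ℝ (fderiv ℝ g) z w v := by
    intro v w
    rw [fderiv_clm_apply hf' (differentiableAt_const v)]
    simp
  show fderiv ℝ (fun y => fderiv ℝ g y ((0:ℝ),(1:ℝ))) z ((1:ℝ),(0:ℝ))
      = fderiv ℝ (fun y => fderiv ℝ g y ((1:ℝ),(0:ℝ))) z ((0:ℝ),(1:ℝ))
  rw [e1 ((0:ℝ),(1:ℝ)) ((1:ℝ),(0:ℝ)), e1 ((1:ℝ),(0:ℝ)) ((0:ℝ),(1:ℝ))]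
  exact hsym _ _

/-- derivative of `s ↦ |s|^(p-1) * s`. -/
lemma hasDerivAt_abs_rpow_mul {p : ℝ} (hp : 3 ≤ p) (x : ℝ) :
    HasDerivAt (fun s : ℝ => |s| ^ (p - 1) * s) (p * |x| ^ (p - 1)) x := by
  have hp1 : (1 : ℝ) ≤ p - 1 := by linarith
  rcases lt_trichotomy x 0 with hx | hx | hx
  · have key : HasDerivAt (fun s : ℝ => -((-s) ^ p)) (p * |x| ^ (p - 1)) x := by
      have h0 : HasDerivAt (fun s : ℝ => -s) (-1 : ℝ) x := (hasDerivAt_id x).neg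
      have h1 : HasDerivAt (fun y : ℝ => y ^ p) (p * (-x) ^ (p - 1)) (-x) :=
        Real.hasDerivAt_rpow_const (Or.inl (by linarith))
      have h2 : HasDerivAt (fun s : ℝ => -((-s) ^ p)) (-(p * (-x) ^ (p - 1) * -1)) x :=
        (h1.comp x h0).neg
      convert h2 using 1
      rw [abs_of_neg hx]; ring
    apply key.congr_of_eventuallyEq
    filter_upwards [eventually_lt_nhds hx] with s hs
    rw [abs_of_neg hs]
    have h3 : (-s) ^ (p - 1) * (-s) = (-s) ^ p := by
      rw [← Real.rpow_add_one (by intro h; nlinarith [neg_eq_zero.mp h] : (-s) ≠ 0)]; norm_num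
    nlinarith [h3]
  · subst hx
    rw [hasDerivAt_iff_tendsto_slope]
    have hev : ∀ s ∈ ({(0:ℝ)}ᶜ : Set ℝ), slope (fun s : ℝ => |s| ^ (p - 1) * s) 0 s
        = |s| ^ (p - 1) := by
      intro s hs
      have hs0 : s ≠ 0 := hs
      simp [slope, hs0, mul_comm, mul_div_assoc, div_self hs0]
    have hval : p * |(0:ℝ)| ^ (p - 1) = 0 := by
      rw [abs_zero, Real.zero_rpow (by linarith)]; ring
    rw [hval]
    apply Filter.Tendsto.congr' ?_ ?_
    · exact fun s => |s| ^ (p - 1)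
    · filter_upwards [self_mem_nhdsWithin] with s hs using (hev s hs).symm
    · have h1 : Filter.Tendsto (fun s : ℝ => |s| ^ (p - 1)) (nhds 0) (nhds 0) := by
        have : Filter.Tendsto (fun s : ℝ => |s|) (nhds 0) (nhds 0) := by
          simpa using continuous_abs.tendsto (0 : ℝ)
        have h2 : Filter.Tendsto (fun y : ℝ => y ^ (p - 1)) (nhds 0) (nhds (0 ^ (p-1))) := by
          apply (Real.continuousAt_rpow_const 0 (p-1) (Or.inr (by linarith))).tendsto
        rw [Real.zero_rpow (by linarith)] at h2
        exact h2.comp this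
      exact h1.mono_left nhdsWithin_le_nhds
  · have key : HasDerivAt (fun s : ℝ => s ^ p) (p * |x| ^ (p - 1)) x := by
      have h1 : HasDerivAt (fun y : ℝ => y ^ p) (p * x ^ (p - 1)) x :=
        Real.hasDerivAt_rpow_const (Or.inl (by linarith))
      rwa [abs_of_pos hx]
    apply key.congr_of_eventuallyEq
    filter_upwards [eventually_gt_nhds hx] with s hs
    rw [abs_of_pos hs]
    rw [← Real.rpow_add_one (ne_of_gt hs)]; norm_num


/-- Fréchet derivative of the norm on `E3` away from the origin. -/
lemma hasFDerivAt_normE3 {x : E3} (hx : x ≠ 0) :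
    HasFDerivAt (fun y : E3 => ‖y‖) (‖x‖⁻¹ • (innerSL ℝ x)) x := by
  have h := (hasFDerivAt_id x).inner ℝ (hasFDerivAt_id x)
  have hxn : ‖x‖ ≠ 0 := norm_ne_zero_iff.mpr hx
  have hne : (inner ℝ x x : ℝ) ≠ 0 := by
    rw [real_inner_self_eq_norm_mul_norm]
    exact mul_ne_zero hxn hxn
  have hsqrt := (Real.hasDerivAt_sqrt hne).comp_hasFDerivAt
    (f := fun y : E3 => (inner ℝ y y : ℝ)) x h
  have hfun : (fun y : E3 => Real.sqrt (inner ℝ y y : ℝ)) = fun y : E3 => ‖y‖ := by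
    funext y
    rw [norm_eq_sqrt_real_inner]
  have hs : Real.sqrt (inner ℝ x x : ℝ) = ‖x‖ := (norm_eq_sqrt_real_inner x).symm
  have hD : (1 / (2 * Real.sqrt (inner ℝ x x : ℝ))) •
      ((fderivInnerCLM ℝ ((id x : E3), (id x : E3))).comp
        ((ContinuousLinearMap.id ℝ E3).prod (ContinuousLinearMap.id ℝ E3)))
      = ‖x‖⁻¹ • (innerSL ℝ x) := by
    apply ContinuousLinearMap.ext
    intro v
    simp only [ContinuousLinearMap.coe_smul', Pi.smul_apply, ContinuousLinearMap.coe_comp',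
      Function.comp_apply, ContinuousLinearMap.prod_apply, ContinuousLinearMap.coe_id', id_eq,
      fderivInnerCLM_apply, smul_eq_mul, innerSL_apply_apply, hs]
    rw [real_inner_comm v x]
    field_simp
    ring
  rw [hD] at hsqrt
  rw [← hfun]
  exact hsqrt

/-- derivative of the spatial slice. -/
lemma hasFDerivAt_sliceX {G : E3 × ℝ → ℝ} {x : E3} {t : ℝ}
    (hG : DifferentiableAt ℝ G (x, t)) :
    HasFDerivAt (fun y : E3 => G (y, t))
      ((fderiv ℝ G (x, t)).comp (ContinuousLinearMap.inl ℝ E3 ℝ)) x := by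
  have hc : (ContinuousLinearMap.id ℝ E3).prod (0 : E3 →L[ℝ] ℝ)
      = ContinuousLinearMap.inl ℝ E3 ℝ := by
    apply ContinuousLinearMap.ext; intro v; rfl
  have h1 : HasFDerivAt (fun y : E3 => (y, t)) (ContinuousLinearMap.inl ℝ E3 ℝ) x :=
    hc ▸ ((hasFDerivAt_id x).prodMk (hasFDerivAt_const t x))
  exact hG.hasFDerivAt.comp x h1

lemma hasDerivAt_sliceT {G : E3 × ℝ → ℝ} {x : E3} {t : ℝ}
    (hG : DifferentiableAt ℝ G (x, t)) :
    HasDerivAt (fun s => G (x, s)) (pt G (x, t)) t := by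
  have h1 : HasDerivAt (fun s : ℝ => ((x : E3), s)) ((0 : E3), (1 : ℝ)) t := by
    simpa using (hasDerivAt_const t x).prodMk (hasDerivAt_id t)
  exact hG.hasFDerivAt.comp_hasDerivAt t h1

variable {u : E3 × ℝ → ℝ}

/-- the spatial slice of a radial function is a function of the norm. -/
lemma slice_eq_prof (hrad : RadialIn u) {t : ℝ} (ht : 0 ≤ t) (y : E3) :
    u (y, t) = prof u (‖y‖, t) := by
  have : ‖y‖ = ‖(‖y‖ : ℝ) • e1‖ := by
    rw [norm_smul, norm_e1, Real.norm_eq_abs, abs_of_nonneg (norm_nonneg y), mul_one]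
  exact hrad y ((‖y‖ : ℝ) • e1) t ht this

/-- first spatial derivatives of a radial function, away from the origin. -/
lemma px_radial (hu : ContDiff ℝ 3 u) (hrad : RadialIn u) (i : Fin 3) {y : E3} {t : ℝ}
    (ht : 0 ≤ t) (hy : y ≠ 0) :
    px i u (y, t) = d1 (prof u) (‖y‖, t) *
      (‖y‖⁻¹ * (innerSL ℝ (EuclideanSpace.single i (1:ℝ))) y) := by
  have hslice : HasFDerivAt (fun y' : E3 => u (y', t))
      ((fderiv ℝ u (y, t)).comp (ContinuousLinearMap.inl ℝ E3 ℝ)) y :=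
    hasFDerivAt_sliceX ((hu.differentiable (by norm_num)).differentiableAt)
  have hf : DifferentiableAt ℝ (prof u) (‖y‖, t) := by
    have : ContDiff ℝ 3 (prof u) := by
      have : prof u = u ∘ (((ContinuousLinearMap.fst ℝ ℝ ℝ).smulRight e1).prod
        (ContinuousLinearMap.snd ℝ ℝ ℝ)) := rfl
      rw [this]
      exact hu.comp (ContinuousLinearMap.contDiff _)
    exact (this.differentiable (by norm_num)).differentiableAt
  have hφ : HasFDerivAt (fun y' : E3 => prof u (‖y'‖, t))
      (d1 (prof u) (‖y‖, t) • ((‖y‖)⁻¹ • (innerSL ℝ y))) y :=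
    (hasDerivAt_slice1 hf).comp_hasFDerivAt y (hasFDerivAt_normE3 hy)
  have heqf : (fun y' : E3 => u (y', t)) = fun y' : E3 => prof u (‖y'‖, t) := by
    funext y'; exact slice_eq_prof hrad ht y'
  rw [heqf] at hslice
  have := hφ.unique hslice
  have happ := congrArg (fun (L : E3 →L[ℝ] ℝ) => L (EuclideanSpace.single i (1:ℝ))) this
  simp only [ContinuousLinearMap.coe_comp', Function.comp_apply,
    ContinuousLinearMap.smul_apply, smul_eq_mul, ContinuousLinearMap.coe_smul',
    Pi.smul_apply] at happ
  have hlhs : px i u (y, t) = (fderiv ℝ u (y, t))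
      ((ContinuousLinearMap.inl ℝ E3 ℝ) (EuclideanSpace.single i (1:ℝ))) := rfl
  rw [hlhs, ← happ, innerSL_apply_apply, innerSL_apply_apply, real_inner_comm]

lemma contDiff_prof (hu : ContDiff ℝ 3 u) : ContDiff ℝ 3 (prof u) := by
  have h : prof u = u ∘ (((ContinuousLinearMap.fst ℝ ℝ ℝ).smulRight e1).prod
      (ContinuousLinearMap.snd ℝ ℝ ℝ)) := rfl
  rw [h]
  exact hu.comp (ContinuousLinearMap.contDiff _)

lemma pxx_radial (hu : ContDiff ℝ 3 u) (hrad : RadialIn u) (i : Fin 3) {r t c : ℝ}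
    (ht : 0 ≤ t) (hr : 0 < r)
    (hc : (inner ℝ ((r : ℝ) • e1 : E3) (EuclideanSpace.single i (1:ℝ)) : ℝ) = c) :
    px i (px i u) (((r : ℝ) • e1 : E3), t)
      = d1 (d1 (prof u)) (r, t) * (r⁻¹ * c)^2
        + d1 (prof u) (r, t) * (r⁻¹ - r⁻¹ * (r⁻¹ * c)^2) := by
  set v : E3 := EuclideanSpace.single i (1:ℝ) with hv
  set x : E3 := (r : ℝ) • e1 with hxdef
  have hx : x ≠ 0 := by
    intro h0
    have : ‖x‖ = 0 := by rw [h0]; simp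
    rw [hxdef, norm_smul, norm_e1, Real.norm_eq_abs, abs_of_pos hr, mul_one] at this
    exact (ne_of_gt hr) this
  have hxn : ‖x‖ = r := by
    rw [hxdef, norm_smul, norm_e1, Real.norm_eq_abs, abs_of_pos hr, mul_one]
  have hf3 : ContDiff ℝ 3 (prof u) := contDiff_prof hu
  have hd1f : ContDiff ℝ 2 (d1 (prof u)) := by
    exact cd_apply (m := 2) hf3 (by norm_num) ((1:ℝ), (0:ℝ))
  have hdiffpx : DifferentiableAt ℝ (px i u) (x, t) := by
    have : ContDiff ℝ 2 (px i u) := cd_apply hu (by norm_num) (v, (0:ℝ))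
    exact (this.differentiable (by norm_num)).differentiableAt
  -- the function A agreeing with the slice of `px i u` near x
  set A : E3 → ℝ := fun y => d1 (prof u) (‖y‖, t) * (‖y‖⁻¹ * (innerSL ℝ v) y) with hA
  have hev : (fun y : E3 => px i u (y, t)) =ᶠ[nhds x] A := by
    filter_upwards [isOpen_compl_singleton.mem_nhds hx] with y hy
    exact px_radial hu hrad i ht hy
  -- derivative of A
  have hA1 : HasDerivAt (fun s : ℝ => d1 (prof u) (s, t)) (d1 (d1 (prof u)) (‖x‖, t)) ‖x‖ :=
    hasDerivAt_slice1 ((hd1f.differentiable (by norm_num)).differentiableAt)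
  have hD1 : HasFDerivAt (fun y : E3 => d1 (prof u) (‖y‖, t))
      (d1 (d1 (prof u)) (‖x‖, t) • (‖x‖⁻¹ • (innerSL ℝ x))) x :=
    hA1.comp_hasFDerivAt x (hasFDerivAt_normE3 hx)
  have hxnne : ‖x‖ ≠ 0 := by rw [hxn]; exact ne_of_gt hr
  have hDinv : HasFDerivAt (fun y : E3 => ‖y‖⁻¹)
      (-(‖x‖ ^ 2)⁻¹ • (‖x‖⁻¹ • (innerSL ℝ x))) x :=
    (hasDerivAt_inv hxnne).comp_hasFDerivAt x (hasFDerivAt_normE3 hx)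
  have hDlin : HasFDerivAt (fun y : E3 => (innerSL ℝ v) y) (innerSL ℝ v) x :=
    (innerSL ℝ v).hasFDerivAt
  have hD2 := hDinv.mul hDlin
  have hDA := hD1.mul (hD2 : HasFDerivAt (fun y : E3 => ‖y‖⁻¹ * (innerSL ℝ v) y) _ x)
  have key : px i (px i u) (x, t) = fderiv ℝ (fun y : E3 => px i u (y, t)) x v := by
    rw [(hasFDerivAt_sliceX hdiffpx).fderiv]
    rfl
  rw [key, hev.fderiv_eq, show fderiv ℝ A x = _ from hDA.fderiv]
  have hinner_xx : (inner ℝ x x : ℝ) = r * r := by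
    rw [real_inner_self_eq_norm_mul_norm, hxn]
  have hinner_xv : (inner ℝ x v : ℝ) = c := hc
  have hinner_vx : (inner ℝ v x : ℝ) = c := by rw [real_inner_comm]; exact hc
  have hinner_vv : (inner ℝ v v : ℝ) = 1 := by
    rw [real_inner_self_eq_norm_mul_norm]
    have : ‖v‖ = 1 := by simp [hv, EuclideanSpace.norm_single]
    rw [this]; ring
  simp only [ContinuousLinearMap.add_apply, ContinuousLinearMap.smul_apply,
    ContinuousLinearMap.coe_smul', Pi.smul_apply, innerSL_apply_apply, smul_eq_mul, Pi.mul_apply,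
    hinner_xv, hinner_vx, hinner_vv, hxn]
  field_simp
  ring

lemma lap_radial (hu : ContDiff ℝ 3 u) (hrad : RadialIn u) {r t : ℝ}
    (ht : 0 ≤ t) (hr : 0 < r) :
    lap u (((r : ℝ) • e1 : E3), t)
      = d1 (d1 (prof u)) (r, t) + 2 / r * d1 (prof u) (r, t) := by
  have h0 : (inner ℝ ((r : ℝ) • e1 : E3) (EuclideanSpace.single (0 : Fin 3) (1:ℝ)) : ℝ) = r := by
    rw [real_inner_smul_left]
    simp [e1, EuclideanSpace.inner_single_left, EuclideanSpace.single_apply]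
  have h1 : (inner ℝ ((r : ℝ) • e1 : E3) (EuclideanSpace.single (1 : Fin 3) (1:ℝ)) : ℝ) = 0 := by
    rw [real_inner_smul_left]
    simp [e1, EuclideanSpace.inner_single_left, EuclideanSpace.single_apply]
  have h2 : (inner ℝ ((r : ℝ) • e1 : E3) (EuclideanSpace.single (2 : Fin 3) (1:ℝ)) : ℝ) = 0 := by
    rw [real_inner_smul_left]
    simp [e1, EuclideanSpace.inner_single_left, EuclideanSpace.single_apply]
  have e0 := pxx_radial hu hrad 0 ht hr h0
  have e1' := pxx_radial hu hrad 1 ht hr h1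
  have e2 := pxx_radial hu hrad 2 ht hr h2
  have hrne : r ≠ 0 := ne_of_gt hr
  show (∑ i : Fin 3, px i (px i u) (((r : ℝ) • e1 : E3), t)) = _
  rw [Fin.sum_univ_three, e0, e1', e2]
  field_simp
  ring

lemma deriv_eq_of_eqOn_Ici {g h : ℝ → ℝ} {t : ℝ} (hg : DifferentiableAt ℝ g t)
    (hh : DifferentiableAt ℝ h t) (he : ∀ s, t ≤ s → g s = h s) :
    deriv g t = deriv h t := by
  have h1 : HasDerivWithinAt g (deriv g t) (Ici t) t := hg.hasDerivAt.hasDerivWithinAt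
  have h2 : HasDerivWithinAt g (deriv h t) (Ici t) t :=
    (hh.hasDerivAt.hasDerivWithinAt).congr (fun s hs => he s hs) (he t le_rfl)
  have hud : UniqueDiffWithinAt ℝ (Ici t) t := uniqueDiffOn_Ici t t (self_mem_Ici)
  rw [← h1.derivWithin hud, ← h2.derivWithin hud]

lemma deriv_eq_of_eqOn_Icc {g h : ℝ → ℝ} {a b t : ℝ} (hab : a < b) (htm : t ∈ Icc a b)
    (hg : DifferentiableAt ℝ g t) (hh : DifferentiableAt ℝ h t)
    (he : ∀ s ∈ Icc a b, g s = h s) :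
    deriv g t = deriv h t := by
  have h1 : HasDerivWithinAt g (deriv g t) (Icc a b) t := hg.hasDerivAt.hasDerivWithinAt
  have h2 : HasDerivWithinAt g (deriv h t) (Icc a b) t :=
    (hh.hasDerivAt.hasDerivWithinAt).congr (fun s hs => he s hs) (he t htm)
  have hud : UniqueDiffWithinAt ℝ (Icc a b) t := uniqueDiffOn_Icc hab t htm
  rw [← h1.derivWithin hud, ← h2.derivWithin hud]

/-- `∂ₜ` preserves radiality. -/
lemma radial_pt {G : E3 × ℝ → ℝ} (hG : Differentiable ℝ G) (hrad : RadialIn G) :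
    RadialIn (pt G) := by
  intro x y t ht hn
  have hx := hasDerivAt_sliceT (G := G) (x := x) (t := t) (hG _)
  have hy := hasDerivAt_sliceT (G := G) (x := y) (t := t) (hG _)
  rw [← hx.deriv, ← hy.deriv]
  exact deriv_eq_of_eqOn_Ici hx.differentiableAt hy.differentiableAt
    (fun s hs => hrad x y s (le_trans ht hs) hn)

/-- oddness of the `r`-derivative of an even function. -/
lemma d1_odd_of_even {g : ℝ × ℝ → ℝ} (hg : Differentiable ℝ g) {t : ℝ}
    (hev : ∀ r : ℝ, g (-r, t) = g (r, t)) (r : ℝ) :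
    d1 g (-r, t) = - d1 g (r, t) := by
  have h1 : HasDerivAt (fun s : ℝ => g (s, t)) (d1 g (-r, t)) (-r) :=
    hasDerivAt_slice1 (hg _)
  have h2 : HasDerivAt (fun s : ℝ => g (-s, t)) (- d1 g (-r, t)) r := by
    have := h1.comp r ((hasDerivAt_id r).neg)
    rw [mul_neg_one] at this; exact this
  have h3 : HasDerivAt (fun s : ℝ => g (s, t)) (- d1 g (-r, t)) r := by
    apply h2.congr_of_eventuallyEq
    filter_upwards with s using (hev s).symm
  have h4 : HasDerivAt (fun s : ℝ => g (s, t)) (d1 g (r, t)) r :=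
    hasDerivAt_slice1 (hg _)
  have := h4.unique h3
  linarith [this]

/-- evenness of the `r`-derivative of an odd function. -/
lemma d1_even_of_odd {g : ℝ × ℝ → ℝ} (hg : Differentiable ℝ g) {t : ℝ}
    (hodd : ∀ r : ℝ, g (-r, t) = - g (r, t)) (r : ℝ) :
    d1 g (-r, t) = d1 g (r, t) := by
  have h1 : HasDerivAt (fun s : ℝ => g (s, t)) (d1 g (-r, t)) (-r) :=
    hasDerivAt_slice1 (hg _)
  have h2 : HasDerivAt (fun s : ℝ => g (-s, t)) (- d1 g (-r, t)) r := by
    have := h1.comp r ((hasDerivAt_id r).neg)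
    rw [mul_neg_one] at this; exact this
  have h3 : HasDerivAt (fun s : ℝ => - g (s, t)) (- d1 g (-r, t)) r := by
    apply h2.congr_of_eventuallyEq
    filter_upwards with s using (hodd s).symm
  have h4 : HasDerivAt (fun s : ℝ => - g (s, t)) (- d1 g (r, t)) r :=
    (hasDerivAt_slice1 (hg _)).neg
  have := h4.unique h3
  linarith [this]

/-- The linear map `(r,t) ↦ (r • e1, t)`. -/
def Lm : (ℝ × ℝ) →L[ℝ] (E3 × ℝ) :=
  ((ContinuousLinearMap.fst ℝ ℝ ℝ).smulRight e1).prod (ContinuousLinearMap.snd ℝ ℝ ℝ)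

lemma Lm_apply (z : ℝ × ℝ) : Lm z = (z.1 • e1, z.2) := rfl

/-- `∂ₜ f = (∂ₜ u) ∘ L`. -/
lemma d2_prof_eq (hu : ContDiff ℝ 3 u) (z : ℝ × ℝ) :
    d2 (prof u) z = pt u (z.1 • e1, z.2) := by
  have hdu : DifferentiableAt ℝ u (Lm z) :=
    (hu.differentiable (by norm_num)).differentiableAt
  have hc : fderiv ℝ (u ∘ Lm) z = (fderiv ℝ u (Lm z)).comp Lm :=
    (hdu.hasFDerivAt.comp z Lm.hasFDerivAt).fderiv
  have : d2 (prof u) z = fderiv ℝ (u ∘ Lm) z ((0:ℝ), (1:ℝ)) := rfl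
  rw [this, hc]
  have : Lm ((0:ℝ), (1:ℝ)) = ((0 : E3), (1:ℝ)) := by
    rw [Lm_apply]; simp
  simp only [ContinuousLinearMap.coe_comp', Function.comp_apply, this]
  rfl

lemma d1_prof_eq (hu : ContDiff ℝ 3 u) (z : ℝ × ℝ) :
    d1 (prof u) z = fderiv ℝ u (z.1 • e1, z.2) (e1, (0:ℝ)) := by
  have hdu : DifferentiableAt ℝ u (Lm z) :=
    (hu.differentiable (by norm_num)).differentiableAt
  have hc : fderiv ℝ (u ∘ Lm) z = (fderiv ℝ u (Lm z)).comp Lm :=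
    (hdu.hasFDerivAt.comp z Lm.hasFDerivAt).fderiv
  have h0 : d1 (prof u) z = fderiv ℝ (u ∘ Lm) z ((1:ℝ), (0:ℝ)) := rfl
  rw [h0, hc]
  have h1 : Lm ((1:ℝ), (0:ℝ)) = (e1, (0:ℝ)) := by
    rw [Lm_apply]; simp
  simp only [ContinuousLinearMap.coe_comp', Function.comp_apply, h1]
  rfl

/-- `∂ₜ∂ₜ f = (∂ₜ∂ₜ u) ∘ L`. -/
lemma d2_d2_prof_eq (hu : ContDiff ℝ 3 u) (z : ℝ × ℝ) :
    d2 (d2 (prof u)) z = pt (pt u) (z.1 • e1, z.2) := by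
  have hpt : ContDiff ℝ 2 (pt u) := cd_apply hu (by norm_num) _
  have h1 : d2 (prof u) = (pt u) ∘ Lm := by
    funext w; exact d2_prof_eq hu w
  have hdu : DifferentiableAt ℝ (pt u) (Lm z) :=
    (hpt.differentiable (by norm_num)).differentiableAt
  have hc : fderiv ℝ ((pt u) ∘ Lm) z = (fderiv ℝ (pt u) (Lm z)).comp Lm :=
    (hdu.hasFDerivAt.comp z Lm.hasFDerivAt).fderiv
  have h0 : d2 (d2 (prof u)) z = fderiv ℝ ((pt u) ∘ Lm) z ((0:ℝ), (1:ℝ)) := by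
    rw [h1]; rfl
  rw [h0, hc]
  have h2 : Lm ((0:ℝ), (1:ℝ)) = ((0 : E3), (1:ℝ)) := by
    rw [Lm_apply]; simp
  simp only [ContinuousLinearMap.coe_comp', Function.comp_apply, h2]
  rfl

section eqn

variable {u : E3 × ℝ → ℝ} {p : ℝ}

/-- evenness of the profile. -/
lemma prof_even (hrad : RadialIn u) {t : ℝ} (ht : 0 ≤ t) (r : ℝ) :
    prof u (-r, t) = prof u (r, t) := by
  apply hrad
  · exact ht
  · rw [norm_smul, norm_smul, norm_e1]
    simp

/-- evenness of `∂ₜ f`. -/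
lemma d2_prof_even (hu : ContDiff ℝ 3 u) (hrad : RadialIn u) {t : ℝ} (ht : 0 ≤ t) (r : ℝ) :
    d2 (prof u) (-r, t) = d2 (prof u) (r, t) := by
  rw [d2_prof_eq hu, d2_prof_eq hu]
  apply radial_pt (hu.differentiable (by norm_num)) hrad _ _ _ ht
  rw [norm_smul, norm_smul, norm_e1]
  simp

/-- evenness of `∂ₜ∂ₜ f`. -/
lemma d2_d2_prof_even (hu : ContDiff ℝ 3 u) (hrad : RadialIn u) {t : ℝ} (ht : 0 ≤ t) (r : ℝ) :
    d2 (d2 (prof u)) (-r, t) = d2 (d2 (prof u)) (r, t) := by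
  rw [d2_d2_prof_eq hu, d2_d2_prof_eq hu]
  have hpt : ContDiff ℝ 2 (pt u) := cd_apply hu (by norm_num) _
  apply radial_pt (hpt.differentiable (by norm_num))
    (radial_pt (hu.differentiable (by norm_num)) hrad) _ _ _ ht
  rw [norm_smul, norm_smul, norm_e1]
  simp

/-- the one-dimensional profile equation, away from the origin. -/
lemma prof_eqn (hp : 3 ≤ p) (hu : ContDiff ℝ 3 u)
    (heq : ∀ (x : E3) (t : ℝ), 0 ≤ t →
      pt (pt u) (x, t) - lap u (x, t) + |pt u (x, t)| ^ (p - 1) * pt u (x, t) = 0)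
    (hrad : RadialIn u) {r t : ℝ} (ht : 0 ≤ t) (hr : r ≠ 0) :
    d2 (d2 (prof u)) (r, t) - (d1 (d1 (prof u)) (r, t) + 2 / r * d1 (prof u) (r, t))
      + |d2 (prof u) (r, t)| ^ (p - 1) * d2 (prof u) (r, t) = 0 := by
  have hf3 : ContDiff ℝ 3 (prof u) := contDiff_prof hu
  have main : ∀ s : ℝ, 0 < s →
      d2 (d2 (prof u)) (s, t) - (d1 (d1 (prof u)) (s, t) + 2 / s * d1 (prof u) (s, t))
      + |d2 (prof u) (s, t)| ^ (p - 1) * d2 (prof u) (s, t) = 0 := by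
    intro s hs
    have h := heq ((s : ℝ) • e1) t ht
    rw [lap_radial hu hrad ht hs] at h
    have e2 : pt u (((s : ℝ) • e1 : E3), t) = d2 (prof u) (s, t) := (d2_prof_eq hu (s, t)).symm
    have e22 : pt (pt u) (((s : ℝ) • e1 : E3), t) = d2 (d2 (prof u)) (s, t) :=
      (d2_d2_prof_eq hu (s, t)).symm
    rw [e2, e22] at h
    exact h
  rcases lt_or_gt_of_ne hr with hneg | hpos
  · have h := main (-r) (by linarith)
    have hd2 : d2 (prof u) (-r, t) = d2 (prof u) (r, t) := d2_prof_even hu hrad ht r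
    have hd22 : d2 (d2 (prof u)) (-r, t) = d2 (d2 (prof u)) (r, t) :=
      d2_d2_prof_even hu hrad ht r
    have hd1 : d1 (prof u) (-r, t) = - d1 (prof u) (r, t) :=
      d1_odd_of_even (hf3.differentiable (by norm_num)) (prof_even hrad ht) r
    have hd11 : d1 (d1 (prof u)) (-r, t) = d1 (d1 (prof u)) (r, t) := by
      apply d1_even_of_odd
      · exact (cd_apply (m := 2) hf3 (by norm_num)
          ((1:ℝ), (0:ℝ))).differentiable (by norm_num)
      · exact d1_odd_of_even (hf3.differentiable (by norm_num)) (prof_even hrad ht)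
    rw [hd2, hd22, hd1, hd11] at h
    have hcalc : 2 / (-r) * - d1 (prof u) (r, t) = 2 / r * d1 (prof u) (r, t) := by
      field_simp
    rw [hcalc] at h
    exact h
  · exact main r hpos

/-- the multiplied profile equation, valid for all `r` and `t ≥ 0`. -/
lemma prof_eqn_mul (hp : 3 ≤ p) (hu : ContDiff ℝ 3 u)
    (heq : ∀ (x : E3) (t : ℝ), 0 ≤ t →
      pt (pt u) (x, t) - lap u (x, t) + |pt u (x, t)| ^ (p - 1) * pt u (x, t) = 0)
    (hrad : RadialIn u) {r t : ℝ} (ht : 0 ≤ t) :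
    r * d2 (d2 (prof u)) (r, t) - r * d1 (d1 (prof u)) (r, t) - 2 * d1 (prof u) (r, t)
      + r * (|d2 (prof u) (r, t)| ^ (p - 1) * d2 (prof u) (r, t)) = 0 := by
  have hf3 : ContDiff ℝ 3 (prof u) := contDiff_prof hu
  rcases eq_or_ne r 0 with hr0 | hr
  · subst hr0
    have hd1 : d1 (prof u) (-(0:ℝ), t) = - d1 (prof u) (0, t) :=
      d1_odd_of_even (hf3.differentiable (by norm_num)) (prof_even hrad ht) 0
    rw [neg_zero] at hd1
    have : d1 (prof u) (0, t) = 0 := by linarith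
    rw [this]; ring
  · have h := prof_eqn hp hu heq hrad ht hr
    have h2 := congrArg (fun y => r * y) h
    simp only [mul_zero] at h2
    have : r * (2 / r * d1 (prof u) (r, t)) = 2 * d1 (prof u) (r, t) := by
      field_simp
    nlinarith [h2, this]

end eqn

lemma d1_mul_fst {g : ℝ × ℝ → ℝ} {z : ℝ × ℝ} (hg : DifferentiableAt ℝ g z) :
    d1 (fun w => w.1 * g w) z = g z + z.1 * d1 g z := by
  have hfst : HasFDerivAt (fun w : ℝ × ℝ => w.1) (ContinuousLinearMap.fst ℝ ℝ ℝ) z :=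
    (ContinuousLinearMap.fst ℝ ℝ ℝ).hasFDerivAt
  have hmul := hfst.mul hg.hasFDerivAt
  show fderiv ℝ (fun w : ℝ × ℝ => w.1 * g w) z ((1:ℝ), (0:ℝ)) = _
  rw [show fderiv ℝ (fun w : ℝ × ℝ => w.1 * g w) z = _ from hmul.fderiv]
  simp [d1]
  ring

lemma d2_mul_fst {g : ℝ × ℝ → ℝ} {z : ℝ × ℝ} (hg : DifferentiableAt ℝ g z) :
    d2 (fun w => w.1 * g w) z = z.1 * d2 g z := by
  have hfst : HasFDerivAt (fun w : ℝ × ℝ => w.1) (ContinuousLinearMap.fst ℝ ℝ ℝ) z :=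
    (ContinuousLinearMap.fst ℝ ℝ ℝ).hasFDerivAt
  have hmul := hfst.mul hg.hasFDerivAt
  show fderiv ℝ (fun w : ℝ × ℝ => w.1 * g w) z ((0:ℝ), (1:ℝ)) = _
  rw [show fderiv ℝ (fun w : ℝ × ℝ => w.1 * g w) z = _ from hmul.fderiv]
  simp [d2]

lemma d1_add {g h : ℝ × ℝ → ℝ} {z : ℝ × ℝ} (hg : DifferentiableAt ℝ g z)
    (hh : DifferentiableAt ℝ h z) :
    d1 (fun w => g w + h w) z = d1 g z + d1 h z := by
  show fderiv ℝ (fun w => g w + h w) z ((1:ℝ), (0:ℝ)) = _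
  rw [show fderiv ℝ (fun w => g w + h w) z = _ from (hg.hasFDerivAt.add hh.hasFDerivAt).fderiv]
  rfl

lemma d2_add {g h : ℝ × ℝ → ℝ} {z : ℝ × ℝ} (hg : DifferentiableAt ℝ g z)
    (hh : DifferentiableAt ℝ h z) :
    d2 (fun w => g w + h w) z = d2 g z + d2 h z := by
  show fderiv ℝ (fun w => g w + h w) z ((0:ℝ), (1:ℝ)) = _
  rw [show fderiv ℝ (fun w => g w + h w) z = _ from (hg.hasFDerivAt.add hh.hasFDerivAt).fderiv]
  rfl

section eqn2

variable {u : E3 × ℝ → ℝ} {p : ℝ}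

/-- the damped wave equation for `V = r ∂ₜ f`. -/
lemma V_eqn (hp : 3 ≤ p) (hu : ContDiff ℝ 3 u)
    (heq : ∀ (x : E3) (t : ℝ), 0 ≤ t →
      pt (pt u) (x, t) - lap u (x, t) + |pt u (x, t)| ^ (p - 1) * pt u (x, t) = 0)
    (hrad : RadialIn u) {r t : ℝ} (ht : 0 < t) :
    d2 (d2 (fun w : ℝ × ℝ => w.1 * d2 (prof u) w)) (r, t)
      - d1 (d1 (fun w : ℝ × ℝ => w.1 * d2 (prof u) w)) (r, t)
      + (p * |d2 (prof u) (r, t)| ^ (p - 1))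
          * d2 (fun w : ℝ × ℝ => w.1 * d2 (prof u) w) (r, t) = 0 := by
  have hf3 : ContDiff ℝ 3 (prof u) := contDiff_prof hu
  have h2f : ContDiff ℝ 2 (d2 (prof u)) := cd_apply (m := 2) hf3 (by norm_num) _
  have h1f2 : ContDiff ℝ 2 (d1 (prof u)) := cd_apply (m := 2) hf3 (by norm_num) _
  have h22f : ContDiff ℝ 1 (d2 (d2 (prof u))) := cd_apply (m := 1) h2f (by norm_num) _
  have h12f : ContDiff ℝ 1 (d1 (d2 (prof u))) := cd_apply (m := 1) h2f (by norm_num) _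
  have h11f : ContDiff ℝ 1 (d1 (d1 (prof u))) := cd_apply (m := 1) h1f2 (by norm_num) _
  have h21f : ContDiff ℝ 1 (d2 (d1 (prof u))) := cd_apply (m := 1) h1f2 (by norm_num) _
  -- identities for first derivatives of V
  have hd2V : (fun w : ℝ × ℝ => d2 (fun w' : ℝ × ℝ => w'.1 * d2 (prof u) w') w)
      = fun w : ℝ × ℝ => w.1 * d2 (d2 (prof u)) w := by
    funext w
    exact d2_mul_fst ((h2f.differentiable (by norm_num)) w)
  have hd1V : (fun w : ℝ × ℝ => d1 (fun w' : ℝ × ℝ => w'.1 * d2 (prof u) w') w)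
      = fun w : ℝ × ℝ => d2 (prof u) w + w.1 * d1 (d2 (prof u)) w := by
    funext w
    exact d1_mul_fst ((h2f.differentiable (by norm_num)) w)
  -- second derivatives of V
  have e22 : d2 (d2 (fun w : ℝ × ℝ => w.1 * d2 (prof u) w)) (r, t)
      = r * d2 (d2 (d2 (prof u))) (r, t) := by
    have : d2 (fun w : ℝ × ℝ => w.1 * d2 (prof u) w)
        = fun w : ℝ × ℝ => w.1 * d2 (d2 (prof u)) w := hd2V
    rw [this]
    exact d2_mul_fst ((h22f.differentiable (by norm_num)) _)
  have e11 : d1 (d1 (fun w : ℝ × ℝ => w.1 * d2 (prof u) w)) (r, t)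
      = 2 * d1 (d2 (prof u)) (r, t) + r * d1 (d1 (d2 (prof u))) (r, t) := by
    have h : d1 (fun w : ℝ × ℝ => w.1 * d2 (prof u) w)
        = fun w : ℝ × ℝ => d2 (prof u) w + w.1 * d1 (d2 (prof u)) w := hd1V
    rw [h]
    rw [d1_add ((h2f.differentiable (by norm_num)) _)
      (((contDiff_fst.mul h12f).differentiable (by norm_num)) _)]
    rw [d1_mul_fst ((h12f.differentiable (by norm_num)) _)]
    ring
  -- Schwarz relations
  have s1 : ∀ w : ℝ × ℝ, d1 (d2 (prof u)) w = d2 (d1 (prof u)) w :=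
    fun w => d1_d2_comm (hf3.of_le (by norm_num)) w
  have s2 : d1 (d1 (d2 (prof u))) (r, t) = d2 (d1 (d1 (prof u))) (r, t) := by
    have hm : d1 (d2 (prof u)) = d2 (d1 (prof u)) := funext s1
    rw [hm]
    exact d1_d2_comm h1f2 (r, t)
  -- time derivative of the multiplied profile equation
  set f := prof u with hf
  have hΦ : HasDerivAt (fun s : ℝ =>
        r * d2 (d2 f) (r, s) - r * d1 (d1 f) (r, s) - 2 * d1 f (r, s)
          + r * (|d2 f (r, s)| ^ (p - 1) * d2 f (r, s)))
      (r * d2 (d2 (d2 f)) (r, t) - r * d2 (d1 (d1 f)) (r, t) - 2 * d2 (d1 f) (r, t)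
          + r * (p * |d2 f (r, t)| ^ (p - 1) * d2 (d2 f) (r, t))) t := by
    have h1 := hasDerivAt_slice2 (G := d2 (d2 f)) (a := r) (b := t)
      ((h22f.differentiable (by norm_num)) _)
    have h2 := hasDerivAt_slice2 (G := d1 (d1 f)) (a := r) (b := t)
      ((h11f.differentiable (by norm_num)) _)
    have h3 := hasDerivAt_slice2 (G := d1 f) (a := r) (b := t)
      ((h1f2.differentiable (by norm_num)) _)
    have h4s := hasDerivAt_slice2 (G := d2 f) (a := r) (b := t)
      ((h2f.differentiable (by norm_num)) _)
    have h4 := (hasDerivAt_abs_rpow_mul hp (d2 f (r, t))).comp t h4s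
    exact (((h1.const_mul r).sub (h2.const_mul r)).sub (h3.const_mul 2)).add
      (h4.const_mul r)
  have hD0 : r * d2 (d2 (d2 f)) (r, t) - r * d2 (d1 (d1 f)) (r, t) - 2 * d2 (d1 f) (r, t)
      + r * (p * |d2 f (r, t)| ^ (p - 1) * d2 (d2 f) (r, t)) = 0 := by
    have hev : (fun s : ℝ =>
        r * d2 (d2 f) (r, s) - r * d1 (d1 f) (r, s) - 2 * d1 f (r, s)
          + r * (|d2 f (r, s)| ^ (p - 1) * d2 f (r, s))) =ᶠ[nhds t] fun _ => 0 := by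
      filter_upwards [Ioi_mem_nhds ht] with s hs
      have := prof_eqn_mul hp hu heq hrad (r := r) (t := s) (le_of_lt hs)
      rw [hf]
      linarith [this]
    have hd := hev.deriv_eq
    rw [hΦ.deriv, deriv_const] at hd
    exact hd
  rw [e22, e11, d2_mul_fst ((h2f.differentiable (by norm_num)) _)]
  have s1' : d1 (d2 f) (r, t) = d2 (d1 f) (r, t) := s1 (r, t)
  rw [s1', s2]
  nlinarith [hD0]

end eqn2

section Xlemmas

variable {u : E3 × ℝ → ℝ} {p : ℝ}

lemma contDiff_V (hu : ContDiff ℝ 3 u) :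
    ContDiff ℝ 2 (fun w : ℝ × ℝ => w.1 * d2 (prof u) w) :=
  contDiff_fst.mul (cd_apply (m := 2) (contDiff_prof hu) (by norm_num) _)

lemma contDiff_d2V (hu : ContDiff ℝ 3 u) :
    ContDiff ℝ 1 (d2 (fun w : ℝ × ℝ => w.1 * d2 (prof u) w)) :=
  cd_apply (m := 1) (contDiff_V hu) (by norm_num) _

lemma contDiff_d1V (hu : ContDiff ℝ 3 u) :
    ContDiff ℝ 1 (d1 (fun w : ℝ × ℝ => w.1 * d2 (prof u) w)) :=
  cd_apply (m := 1) (contDiff_V hu) (by norm_num) _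

lemma contDiff_Xplus (hu : ContDiff ℝ 3 u) : ContDiff ℝ 1 (Xplus u) :=
  (contDiff_d2V hu).add (contDiff_d1V hu)

lemma contDiff_Xminus (hu : ContDiff ℝ 3 u) : ContDiff ℝ 1 (Xminus u) :=
  (contDiff_d2V hu).sub (contDiff_d1V hu)

lemma d2V_apply (hu : ContDiff ℝ 3 u) (z : ℝ × ℝ) :
    d2 (fun w : ℝ × ℝ => w.1 * d2 (prof u) w) z = z.1 * d2 (d2 (prof u)) z :=
  d2_mul_fst (((cd_apply (m := 2) (contDiff_prof hu) (by norm_num)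
    ((0:ℝ),(1:ℝ))).differentiable (by norm_num)) z)

lemma d1V_apply (hu : ContDiff ℝ 3 u) (z : ℝ × ℝ) :
    d1 (fun w : ℝ × ℝ => w.1 * d2 (prof u) w) z
      = d2 (prof u) z + z.1 * d1 (d2 (prof u)) z :=
  d1_mul_fst (((cd_apply (m := 2) (contDiff_prof hu) (by norm_num)
    ((0:ℝ),(1:ℝ))).differentiable (by norm_num)) z)

/-- sum of the two X's is twice `∂ₜ V`. -/
lemma X_sum (z : ℝ × ℝ) : Xplus u z + Xminus u z
    = 2 * d2 (fun w : ℝ × ℝ => w.1 * d2 (prof u) w) z := by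
  simp only [Xplus, Xminus]; ring

/-- transport equation for `X₊`, at positive times. -/
lemma X_eqn_plus (hp : 3 ≤ p) (hu : ContDiff ℝ 3 u)
    (heq : ∀ (x : E3) (t : ℝ), 0 ≤ t →
      pt (pt u) (x, t) - lap u (x, t) + |pt u (x, t)| ^ (p - 1) * pt u (x, t) = 0)
    (hrad : RadialIn u) {r t : ℝ} (ht : 0 < t) :
    d2 (Xplus u) (r, t) - d1 (Xplus u) (r, t)
      = -(p * |d2 (prof u) (r, t)| ^ (p - 1))
          * ((Xplus u (r, t) + Xminus u (r, t)) / 2) := by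
  have hd2 : DifferentiableAt ℝ (d2 (fun w : ℝ × ℝ => w.1 * d2 (prof u) w)) (r, t) :=
    ((contDiff_d2V hu).differentiable (by norm_num)) _
  have hd1 : DifferentiableAt ℝ (d1 (fun w : ℝ × ℝ => w.1 * d2 (prof u) w)) (r, t) :=
    ((contDiff_d1V hu).differentiable (by norm_num)) _
  have e2 : d2 (Xplus u) (r, t)
      = d2 (d2 (fun w : ℝ × ℝ => w.1 * d2 (prof u) w)) (r, t)
        + d2 (d1 (fun w : ℝ × ℝ => w.1 * d2 (prof u) w)) (r, t) := d2_add hd2 hd1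
  have e1 : d1 (Xplus u) (r, t)
      = d1 (d2 (fun w : ℝ × ℝ => w.1 * d2 (prof u) w)) (r, t)
        + d1 (d1 (fun w : ℝ × ℝ => w.1 * d2 (prof u) w)) (r, t) := d1_add hd2 hd1
  have hsw : d1 (d2 (fun w : ℝ × ℝ => w.1 * d2 (prof u) w)) (r, t)
      = d2 (d1 (fun w : ℝ × ℝ => w.1 * d2 (prof u) w)) (r, t) :=
    d1_d2_comm (contDiff_V hu) (r, t)
  have hVe := V_eqn hp hu heq hrad (r := r) ht
  have hXs := X_sum (u := u) (r, t)
  rw [e2, e1, hXs, hsw]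
  linear_combination hVe

/-- transport equation for `X₋`, at positive times. -/
lemma X_eqn_minus (hp : 3 ≤ p) (hu : ContDiff ℝ 3 u)
    (heq : ∀ (x : E3) (t : ℝ), 0 ≤ t →
      pt (pt u) (x, t) - lap u (x, t) + |pt u (x, t)| ^ (p - 1) * pt u (x, t) = 0)
    (hrad : RadialIn u) {r t : ℝ} (ht : 0 < t) :
    d2 (Xminus u) (r, t) + d1 (Xminus u) (r, t)
      = -(p * |d2 (prof u) (r, t)| ^ (p - 1))
          * ((Xplus u (r, t) + Xminus u (r, t)) / 2) := by
  have hd2 : DifferentiableAt ℝ (d2 (fun w : ℝ × ℝ => w.1 * d2 (prof u) w)) (r, t) :=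
    ((contDiff_d2V hu).differentiable (by norm_num)) _
  have hd1 : DifferentiableAt ℝ (d1 (fun w : ℝ × ℝ => w.1 * d2 (prof u) w)) (r, t) :=
    ((contDiff_d1V hu).differentiable (by norm_num)) _
  have e2 : d2 (Xminus u) (r, t)
      = d2 (d2 (fun w : ℝ × ℝ => w.1 * d2 (prof u) w)) (r, t)
        - d2 (d1 (fun w : ℝ × ℝ => w.1 * d2 (prof u) w)) (r, t) := by
    show d2 (fun z => d2 (fun w : ℝ × ℝ => w.1 * d2 (prof u) w) z
        - d1 (fun w : ℝ × ℝ => w.1 * d2 (prof u) w) z) (r, t) = _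
    have : (fun z => d2 (fun w : ℝ × ℝ => w.1 * d2 (prof u) w) z
        - d1 (fun w : ℝ × ℝ => w.1 * d2 (prof u) w) z)
        = fun z => d2 (fun w : ℝ × ℝ => w.1 * d2 (prof u) w) z
          + (- d1 (fun w : ℝ × ℝ => w.1 * d2 (prof u) w) z) := by
      funext z; ring
    rw [this, d2_add (h := fun z => - d1 (fun w : ℝ × ℝ => w.1 * d2 (prof u) w) z) hd2 hd1.neg]
    have hneg : d2 (fun z => - d1 (fun w : ℝ × ℝ => w.1 * d2 (prof u) w) z) (r, t)
        = - d2 (d1 (fun w : ℝ × ℝ => w.1 * d2 (prof u) w)) (r, t) := by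
      show fderiv ℝ _ _ _ = _
      rw [fderiv_fun_neg]
      rfl
    rw [hneg]; ring
  have e1 : d1 (Xminus u) (r, t)
      = d1 (d2 (fun w : ℝ × ℝ => w.1 * d2 (prof u) w)) (r, t)
        - d1 (d1 (fun w : ℝ × ℝ => w.1 * d2 (prof u) w)) (r, t) := by
    show d1 (fun z => d2 (fun w : ℝ × ℝ => w.1 * d2 (prof u) w) z
        - d1 (fun w : ℝ × ℝ => w.1 * d2 (prof u) w) z) (r, t) = _
    have : (fun z => d2 (fun w : ℝ × ℝ => w.1 * d2 (prof u) w) z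
        - d1 (fun w : ℝ × ℝ => w.1 * d2 (prof u) w) z)
        = fun z => d2 (fun w : ℝ × ℝ => w.1 * d2 (prof u) w) z
          + (- d1 (fun w : ℝ × ℝ => w.1 * d2 (prof u) w) z) := by
      funext z; ring
    rw [this, d1_add (h := fun z => - d1 (fun w : ℝ × ℝ => w.1 * d2 (prof u) w) z) hd2 hd1.neg]
    have hneg : d1 (fun z => - d1 (fun w : ℝ × ℝ => w.1 * d2 (prof u) w) z) (r, t)
        = - d1 (d1 (fun w : ℝ × ℝ => w.1 * d2 (prof u) w)) (r, t) := by
      show fderiv ℝ _ _ _ = _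
      rw [fderiv_fun_neg]
      rfl
    rw [hneg]; ring
  have hsw : d1 (d2 (fun w : ℝ × ℝ => w.1 * d2 (prof u) w)) (r, t)
      = d2 (d1 (fun w : ℝ × ℝ => w.1 * d2 (prof u) w)) (r, t) :=
    d1_d2_comm (contDiff_V hu) (r, t)
  have hVe := V_eqn hp hu heq hrad (r := r) ht
  have hXs := X_sum (u := u) (r, t)
  rw [e2, e1, hXs, hsw]
  linear_combination hVe

end Xlemmas

section parity

variable {u : E3 × ℝ → ℝ}

/-- oddness of `∂₁∂ₜf` in `r`. -/
lemma d1_d2_prof_odd (hu : ContDiff ℝ 3 u) (hrad : RadialIn u) {t : ℝ} (ht : 0 ≤ t) (r : ℝ) :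
    d1 (d2 (prof u)) (-r, t) = - d1 (d2 (prof u)) (r, t) :=
  d1_odd_of_even ((cd_apply (m := 2) (contDiff_prof hu) (by norm_num)
    ((0:ℝ),(1:ℝ))).differentiable (by norm_num)) (d2_prof_even hu hrad ht) r

lemma Xplus_par (hu : ContDiff ℝ 3 u) (hrad : RadialIn u) {t : ℝ} (ht : 0 ≤ t) (r : ℝ) :
    Xplus u (-r, t) = - Xminus u (r, t) := by
  show d2 (fun w : ℝ × ℝ => w.1 * d2 (prof u) w) (-r, t)
      + d1 (fun w : ℝ × ℝ => w.1 * d2 (prof u) w) (-r, t)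
    = -(d2 (fun w : ℝ × ℝ => w.1 * d2 (prof u) w) (r, t)
      - d1 (fun w : ℝ × ℝ => w.1 * d2 (prof u) w) (r, t))
  rw [d2V_apply hu, d2V_apply hu, d1V_apply hu, d1V_apply hu]
  simp only
  rw [d2_d2_prof_even hu hrad ht r, d2_prof_even hu hrad ht r, d1_d2_prof_odd hu hrad ht r]
  ring

lemma Xminus_par (hu : ContDiff ℝ 3 u) (hrad : RadialIn u) {t : ℝ} (ht : 0 ≤ t) (r : ℝ) :
    Xminus u (-r, t) = - Xplus u (r, t) := by
  show d2 (fun w : ℝ × ℝ => w.1 * d2 (prof u) w) (-r, t)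
      - d1 (fun w : ℝ × ℝ => w.1 * d2 (prof u) w) (-r, t)
    = -(d2 (fun w : ℝ × ℝ => w.1 * d2 (prof u) w) (r, t)
      + d1 (fun w : ℝ × ℝ => w.1 * d2 (prof u) w) (r, t))
  rw [d2V_apply hu, d2V_apply hu, d1V_apply hu, d1V_apply hu]
  simp only
  rw [d2_d2_prof_even hu hrad ht r, d2_prof_even hu hrad ht r, d1_d2_prof_odd hu hrad ht r]
  ring

/-- vanishing of `∂ₜ f` outside the support. -/
lemma d2_prof_supp (hu : ContDiff ℝ 3 u) {R T : ℝ} (hT : 0 < T)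
    (hvan : ∀ (x : E3) (t : ℝ), R ≤ ‖x‖ → 0 ≤ t → t ≤ T → u (x, t) = 0)
    {r t : ℝ} (hr : R ≤ |r|) (ht : t ∈ Icc 0 T) :
    d2 (prof u) (r, t) = 0 := by
  have hf3 : ContDiff ℝ 3 (prof u) := contDiff_prof hu
  have hs := hasDerivAt_slice2 (G := prof u) (a := r) (b := t)
    ((hf3.differentiable (by norm_num)) _)
  rw [← hs.deriv]
  have h0 : ∀ s ∈ Icc 0 T, prof u (r, s) = (fun _ : ℝ => (0:ℝ)) s := by
    intro s hs'
    apply hvan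
    · rw [norm_smul, norm_e1, mul_one]; exact hr
    · exact hs'.1
    · exact hs'.2
  rw [deriv_eq_of_eqOn_Icc hT ht (hasDerivAt_slice2
    ((hf3.differentiable (by norm_num)) _)).differentiableAt
    (differentiableAt_const 0) h0, deriv_const]

/-- vanishing of `X±` outside the support. -/
lemma X_supp (hu : ContDiff ℝ 3 u) {R T : ℝ} (hT : 0 < T)
    (hvan : ∀ (x : E3) (t : ℝ), R ≤ ‖x‖ → 0 ≤ t → t ≤ T → u (x, t) = 0)
    {r t : ℝ} (hr : R < |r|) (ht : t ∈ Icc 0 T) :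
    Xplus u (r, t) = 0 ∧ Xminus u (r, t) = 0 := by
  have hf3 : ContDiff ℝ 3 (prof u) := contDiff_prof hu
  have h2f : ContDiff ℝ 2 (d2 (prof u)) := cd_apply (m := 2) hf3 (by norm_num) _
  -- ∂ₜ∂ₜ f vanishes at (r, t)
  have h22 : d2 (d2 (prof u)) (r, t) = 0 := by
    have hs := hasDerivAt_slice2 (G := d2 (prof u)) (a := r) (b := t)
      ((h2f.differentiable (by norm_num)) _)
    rw [← hs.deriv]
    have h0 : ∀ s ∈ Icc 0 T, d2 (prof u) (r, s) = (fun _ : ℝ => (0:ℝ)) s := by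
      intro s hs'
      exact d2_prof_supp hu hT hvan (le_of_lt hr) hs'
    rw [deriv_eq_of_eqOn_Icc hT ht hs.differentiableAt
      (differentiableAt_const 0) h0, deriv_const]
  -- ∂ᵣ∂ₜ f vanishes at (r, t)
  have h12 : d1 (d2 (prof u)) (r, t) = 0 := by
    have hs := hasDerivAt_slice1 (G := d2 (prof u)) (a := r) (b := t)
      ((h2f.differentiable (by norm_num)) _)
    rw [← hs.deriv]
    have hev : (fun s : ℝ => d2 (prof u) (s, t)) =ᶠ[nhds r] fun _ => (0:ℝ) := by
      have hop : IsOpen {s : ℝ | R < |s|} := by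
        have : {s : ℝ | R < |s|} = abs ⁻¹' (Ioi R) := rfl
        rw [this]
        exact isOpen_Ioi.preimage continuous_abs
      filter_upwards [hop.mem_nhds hr] with s hs'
      exact d2_prof_supp hu hT hvan (le_of_lt hs') ht
    rw [hev.deriv_eq, deriv_const]
  have hd2f : d2 (prof u) (r, t) = 0 := d2_prof_supp hu hT hvan (le_of_lt hr) ht
  constructor
  · show d2 (fun w : ℝ × ℝ => w.1 * d2 (prof u) w) (r, t)
      + d1 (fun w : ℝ × ℝ => w.1 * d2 (prof u) w) (r, t) = 0
    rw [d2V_apply hu, d1V_apply hu]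
    simp only
    rw [h22, hd2f, h12]
    ring
  · show d2 (fun w : ℝ × ℝ => w.1 * d2 (prof u) w) (r, t)
      - d1 (fun w : ℝ × ℝ => w.1 * d2 (prof u) w) (r, t) = 0
    rw [d2V_apply hu, d1V_apply hu]
    simp only
    rw [h22, hd2f, h12]
    ring

end parity

/-- ODE comparison: if `g' ≤ C (Z - g)` on `(0, T)` then
`g T ≤ Z + (g 0 - Z) exp (-C T)`. -/
lemma ode_bound {g : ℝ → ℝ} {C Z T : ℝ} (hC : 0 ≤ C) (hT : 0 ≤ T)
    (hcont : ContinuousOn g (Icc 0 T))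
    (hderiv : ∀ s ∈ Ioo 0 T, ∃ g', HasDerivAt g g' s ∧ g' ≤ C * (Z - g s)) :
    g T ≤ Z + (g 0 - Z) * Real.exp (-(C * T)) := by
  set h : ℝ → ℝ := fun s => (g s - Z) * Real.exp (C * s) with hh
  have hmono : AntitoneOn h (Icc 0 T) := by
    apply antitoneOn_of_deriv_nonpos (convex_Icc 0 T)
    · exact ((hcont.sub continuousOn_const).mul
        ((Real.continuous_exp.comp (continuous_const.mul continuous_id)).continuousOn))
    · intro s hs
      rw [interior_Icc] at hs
      obtain ⟨g', hg', _⟩ := hderiv s hs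
      exact (((hg'.sub_const Z).mul
        (((Real.hasDerivAt_exp (C * s)).comp s
          ((hasDerivAt_id s).const_mul C)))).differentiableAt).differentiableWithinAt
    · intro s hs
      rw [interior_Icc] at hs
      obtain ⟨g', hg', hle⟩ := hderiv s hs
      have hexp : HasDerivAt (fun x : ℝ => Real.exp (C * x))
          (Real.exp (C * s) * C) s := by
        have := (Real.hasDerivAt_exp (C * s)).comp s ((hasDerivAt_id s).const_mul C)
        simpa [mul_comm, Function.comp_def] using this
      have hH : HasDerivAt h (g' * Real.exp (C * s)
          + (g s - Z) * (Real.exp (C * s) * C)) s :=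
        ((hg'.sub_const Z).mul hexp)
      rw [hH.deriv]
      have he : (0:ℝ) < Real.exp (C * s) := Real.exp_pos _
      nlinarith [hle, he]
  have key := hmono (left_mem_Icc.mpr hT) (right_mem_Icc.mpr hT) hT
  have he : (0:ℝ) < Real.exp (C * T) := Real.exp_pos _
  have hc0 : h T ≤ h 0 := key
  rw [hh] at hc0
  simp only [mul_zero, Real.exp_zero, mul_one] at hc0
  have hinv := mul_le_mul_of_nonneg_right hc0 (le_of_lt (Real.exp_pos (-(C * T))))
  rw [mul_assoc, ← Real.exp_add] at hinv
  simp only [add_neg_cancel, Real.exp_zero, mul_one] at hinv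
  linarith [hinv]

/-- the damping bound used along characteristics. -/
lemma damp_bound {c Cc y w Z : ℝ} (hc0 : 0 ≤ c) (hcC : c ≤ Cc) (hy : y^2 ≤ Z)
    (hw : w^2 ≤ Z) : -c * y * (y + w) ≤ Cc * (Z - y^2) := by
  have h1 : -c * y * (y + w) ≤ c * (|y| * |w| - y^2) := by
    have : -c * y * (y + w) = c * (-(y * w) - y^2) := by ring
    rw [this]
    apply mul_le_mul_of_nonneg_left _ hc0
    have : -(y * w) ≤ |y| * |w| := by
      rw [← abs_mul]
      exact neg_le_abs _
    linarith
  rcases le_or_gt (|y| * |w|) (y^2) with hcase | hcase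
  · have h2 : c * (|y| * |w| - y^2) ≤ 0 := by
      apply mul_nonpos_of_nonneg_of_nonpos hc0
      linarith
    have h3 : 0 ≤ Cc * (Z - y^2) := by
      apply mul_nonneg (le_trans hc0 hcC)
      linarith
    linarith
  · have hZ0 : 0 ≤ Z := le_trans (sq_nonneg y) hy
    have hyw : |y| * |w| ≤ Z := by
      have h4 : (|y| * |w|)^2 ≤ Z^2 := by
        have : (|y| * |w|)^2 = y^2 * w^2 := by
          rw [mul_pow, sq_abs, sq_abs]
        rw [this]
        nlinarith [sq_nonneg y, sq_nonneg w]
      nlinarith [abs_nonneg y, abs_nonneg w, h4]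
    have h2 : c * (|y| * |w| - y^2) ≤ Cc * (|y| * |w| - y^2) := by
      apply mul_le_mul_of_nonneg_right hcC
      linarith
    have h3 : Cc * (|y| * |w| - y^2) ≤ Cc * (Z - y^2) := by
      apply mul_le_mul_of_nonneg_left _ (le_trans hc0 hcC)
      linarith
    linarith

section char

variable {u : E3 × ℝ → ℝ} {p : ℝ}

lemma char_bound_plus (hp : 3 ≤ p) (hu : ContDiff ℝ 3 u)
    (heq : ∀ (x : E3) (t : ℝ), 0 ≤ t →
      pt (pt u) (x, t) - lap u (x, t) + |pt u (x, t)| ^ (p - 1) * pt u (x, t) = 0)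
    (hrad : RadialIn u) {Cc Z A2 T : ℝ} (hCc : 0 ≤ Cc)
    (hc_le : ∀ r' s', s' ∈ Icc 0 T → p * |d2 (prof u) (r', s')| ^ (p - 1) ≤ Cc)
    (hQZ : ∀ r' s', s' ∈ Icc 0 T →
      (Xplus u (r', s'))^2 ≤ Z ∧ (Xminus u (r', s'))^2 ≤ Z)
    (hA2 : ∀ r', (Xplus u (r', 0))^2 ≤ A2)
    {r s : ℝ} (hs : s ∈ Icc 0 T) :
    (Xplus u (r, s))^2 ≤ Z + (A2 - Z) * Real.exp (-(Cc * s)) := by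
  have hX1 : ContDiff ℝ 1 (Xplus u) := contDiff_Xplus hu
  set g : ℝ → ℝ := fun σ => (Xplus u (r + s - σ, σ))^2 with hg
  have hgs : g s = (Xplus u (r, s))^2 := by
    rw [hg]; simp
  have hcont : ContinuousOn g (Icc 0 s) := by
    apply Continuous.continuousOn
    have : Continuous (fun σ : ℝ => ((r + s - σ : ℝ), σ)) :=
      (continuous_const.sub continuous_id).prodMk continuous_id
    exact ((hX1.continuous.comp this).pow 2)
  have hderiv : ∀ σ ∈ Ioo 0 s, ∃ g', HasDerivAt g g' σ ∧ g' ≤ Cc * (Z - g σ) := by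
    intro σ hσ
    have hσT : σ ∈ Icc 0 T := ⟨le_of_lt hσ.1, le_trans (le_of_lt hσ.2) hs.2⟩
    have hpath : HasDerivAt (fun σ' : ℝ => ((r + s - σ' : ℝ), σ')) ((-1 : ℝ), (1 : ℝ)) σ := by
      exact ((hasDerivAt_id σ).const_sub (r + s)).prodMk (hasDerivAt_id σ)
    have hdiff : DifferentiableAt ℝ (Xplus u) ((r + s - σ : ℝ), σ) :=
      (hX1.differentiable (by norm_num)) ((r + s - σ : ℝ), σ)
    have hcomp : HasDerivAt (fun σ' : ℝ => Xplus u (r + s - σ', σ'))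
        (fderiv ℝ (Xplus u) ((r + s - σ : ℝ), σ) ((-1 : ℝ), (1 : ℝ))) σ :=
      HasFDerivAt.comp_hasDerivAt (f := fun σ' : ℝ => ((r + s - σ' : ℝ), σ')) σ
        hdiff.hasFDerivAt hpath
    have hdir : fderiv ℝ (Xplus u) ((r + s - σ : ℝ), σ) ((-1 : ℝ), (1 : ℝ))
        = d2 (Xplus u) ((r + s - σ : ℝ), σ) - d1 (Xplus u) ((r + s - σ : ℝ), σ) := by
      have hv : ((-1 : ℝ), (1 : ℝ)) = ((0:ℝ), (1:ℝ)) - ((1:ℝ), (0:ℝ)) := by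
        simp [Prod.ext_iff]
      rw [hv, map_sub]
      rfl
    rw [hdir] at hcomp
    have hG : HasDerivAt g (2 * Xplus u ((r + s - σ : ℝ), σ) * (d2 (Xplus u) ((r + s - σ : ℝ), σ) - d1 (Xplus u) ((r + s - σ : ℝ), σ))) σ := by
      have := hcomp.fun_pow 2
      simpa [hg, mul_comm] using this
    refine ⟨_, hG, ?_⟩
    have heqn := X_eqn_plus hp hu heq hrad (r := r + s - σ) (t := σ) hσ.1
    have hc0 : 0 ≤ p * |d2 (prof u) ((r + s - σ : ℝ), σ)| ^ (p - 1) := by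
      apply mul_nonneg (by linarith)
      exact Real.rpow_nonneg (abs_nonneg _) _
    have hcC := hc_le (r + s - σ) σ hσT
    have hQ := hQZ (r + s - σ) σ hσT
    have hgσ : g σ = (Xplus u ((r + s - σ : ℝ), σ))^2 := rfl
    rw [hgσ]
    have hkey : 2 * Xplus u ((r + s - σ : ℝ), σ) * (d2 (Xplus u) ((r + s - σ : ℝ), σ) - d1 (Xplus u) ((r + s - σ : ℝ), σ))
        = -(p * |d2 (prof u) ((r + s - σ : ℝ), σ)| ^ (p - 1)) * Xplus u ((r + s - σ : ℝ), σ) * (Xplus u ((r + s - σ : ℝ), σ) + Xminus u ((r + s - σ : ℝ), σ)) := by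
      rw [show d2 (Xplus u) ((r + s - σ : ℝ), σ) - d1 (Xplus u) ((r + s - σ : ℝ), σ) = _ from heqn]
      ring
    rw [hkey]
    have := damp_bound (c := p * |d2 (prof u) ((r + s - σ : ℝ), σ)| ^ (p - 1)) (Cc := Cc)
      (y := Xplus u ((r + s - σ : ℝ), σ)) (w := Xminus u ((r + s - σ : ℝ), σ)) (Z := Z) hc0 hcC hQ.1 hQ.2
    linarith [this]
  have hode := ode_bound hCc hs.1 hcont hderiv
  rw [hgs] at hode
  have hg0 : g 0 = (Xplus u (r + s, 0))^2 := by rw [hg]; simp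
  have hA := hA2 (r + s)
  rw [hg0] at hode
  have hexp : (0:ℝ) ≤ Real.exp (-(Cc * s)) := le_of_lt (Real.exp_pos _)
  nlinarith [hode, hA, hexp]

lemma char_bound_minus (hp : 3 ≤ p) (hu : ContDiff ℝ 3 u)
    (heq : ∀ (x : E3) (t : ℝ), 0 ≤ t →
      pt (pt u) (x, t) - lap u (x, t) + |pt u (x, t)| ^ (p - 1) * pt u (x, t) = 0)
    (hrad : RadialIn u) {Cc Z A2 T : ℝ} (hCc : 0 ≤ Cc)
    (hc_le : ∀ r' s', s' ∈ Icc 0 T → p * |d2 (prof u) (r', s')| ^ (p - 1) ≤ Cc)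
    (hQZ : ∀ r' s', s' ∈ Icc 0 T →
      (Xplus u (r', s'))^2 ≤ Z ∧ (Xminus u (r', s'))^2 ≤ Z)
    (hA2 : ∀ r', (Xminus u (r', 0))^2 ≤ A2)
    {r s : ℝ} (hs : s ∈ Icc 0 T) :
    (Xminus u (r, s))^2 ≤ Z + (A2 - Z) * Real.exp (-(Cc * s)) := by
  have hX1 : ContDiff ℝ 1 (Xminus u) := contDiff_Xminus hu
  set g : ℝ → ℝ := fun σ => (Xminus u (r - s + σ, σ))^2 with hg
  have hgs : g s = (Xminus u (r, s))^2 := by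
    rw [hg]; simp
  have hcont : ContinuousOn g (Icc 0 s) := by
    apply Continuous.continuousOn
    have : Continuous (fun σ : ℝ => ((r - s + σ : ℝ), σ)) :=
      (continuous_const.add continuous_id).prodMk continuous_id
    exact ((hX1.continuous.comp this).pow 2)
  have hderiv : ∀ σ ∈ Ioo 0 s, ∃ g', HasDerivAt g g' σ ∧ g' ≤ Cc * (Z - g σ) := by
    intro σ hσ
    have hσT : σ ∈ Icc 0 T := ⟨le_of_lt hσ.1, le_trans (le_of_lt hσ.2) hs.2⟩
    have hpath : HasDerivAt (fun σ' : ℝ => ((r - s + σ' : ℝ), σ')) ((1 : ℝ), (1 : ℝ)) σ := by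
      exact ((hasDerivAt_id σ).const_add (r - s)).prodMk (hasDerivAt_id σ)
    have hdiff : DifferentiableAt ℝ (Xminus u) ((r - s + σ : ℝ), σ) :=
      (hX1.differentiable (by norm_num)) ((r - s + σ : ℝ), σ)
    have hcomp : HasDerivAt (fun σ' : ℝ => Xminus u (r - s + σ', σ'))
        (fderiv ℝ (Xminus u) ((r - s + σ : ℝ), σ) ((1 : ℝ), (1 : ℝ))) σ :=
      HasFDerivAt.comp_hasDerivAt (f := fun σ' : ℝ => ((r - s + σ' : ℝ), σ')) σ
        hdiff.hasFDerivAt hpath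
    have hdir : fderiv ℝ (Xminus u) ((r - s + σ : ℝ), σ) ((1 : ℝ), (1 : ℝ))
        = d2 (Xminus u) ((r - s + σ : ℝ), σ) + d1 (Xminus u) ((r - s + σ : ℝ), σ) := by
      have hv : ((1 : ℝ), (1 : ℝ)) = ((0:ℝ), (1:ℝ)) + ((1:ℝ), (0:ℝ)) := by
        simp [Prod.ext_iff]
      rw [hv, map_add]
      rfl
    rw [hdir] at hcomp
    have hG : HasDerivAt g (2 * Xminus u ((r - s + σ : ℝ), σ) * (d2 (Xminus u) ((r - s + σ : ℝ), σ) + d1 (Xminus u) ((r - s + σ : ℝ), σ))) σ := by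
      have := hcomp.fun_pow 2
      simpa [hg, mul_comm] using this
    refine ⟨_, hG, ?_⟩
    have heqn := X_eqn_minus hp hu heq hrad (r := r - s + σ) (t := σ) hσ.1
    have hc0 : 0 ≤ p * |d2 (prof u) ((r - s + σ : ℝ), σ)| ^ (p - 1) := by
      apply mul_nonneg (by linarith)
      exact Real.rpow_nonneg (abs_nonneg _) _
    have hcC := hc_le (r - s + σ) σ hσT
    have hQ := hQZ (r - s + σ) σ hσT
    have hgσ : g σ = (Xminus u ((r - s + σ : ℝ), σ))^2 := rfl
    rw [hgσ]
    have hkey : 2 * Xminus u ((r - s + σ : ℝ), σ) * (d2 (Xminus u) ((r - s + σ : ℝ), σ) + d1 (Xminus u) ((r - s + σ : ℝ), σ))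
        = -(p * |d2 (prof u) ((r - s + σ : ℝ), σ)| ^ (p - 1)) * Xminus u ((r - s + σ : ℝ), σ) * (Xminus u ((r - s + σ : ℝ), σ) + Xplus u ((r - s + σ : ℝ), σ)) := by
      rw [show d2 (Xminus u) ((r - s + σ : ℝ), σ) + d1 (Xminus u) ((r - s + σ : ℝ), σ) = _ from heqn]
      ring
    rw [hkey]
    have := damp_bound (c := p * |d2 (prof u) ((r - s + σ : ℝ), σ)| ^ (p - 1)) (Cc := Cc)
      (y := Xminus u ((r - s + σ : ℝ), σ)) (w := Xplus u ((r - s + σ : ℝ), σ)) (Z := Z) hc0 hcC hQ.2 hQ.1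
    linarith [this]
  have hode := ode_bound hCc hs.1 hcont hderiv
  rw [hgs] at hode
  have hg0 : g 0 = (Xminus u (r - s, 0))^2 := by rw [hg]; simp
  have hA := hA2 (r - s)
  rw [hg0] at hode
  have hexp : (0:ℝ) ≤ Real.exp (-(Cc * s)) := le_of_lt (Real.exp_pos _)
  nlinarith [hode, hA, hexp]

end char


/-- the quantity `max(sup_r |X₊|, sup_r |X₋|)` does not exceed its
initial value. -/
theorem sup_X_monotone
    (p : ℝ) (hp : 3 ≤ p)
    (u : E3 × ℝ → ℝ) (hu : ContDiff ℝ 3 u)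
    (heq : ∀ (x : E3) (t : ℝ), 0 ≤ t →
      pt (pt u) (x, t) - lap u (x, t) + |pt u (x, t)| ^ (p - 1) * pt u (x, t) = 0)
    (hrad : RadialIn u) (hsupp : SpatialCptSupp u) :
    ∀ t : ℝ, 0 ≤ t →
      max (⨆ r : Ioi (0 : ℝ), |Xplus u ((r : ℝ), t)|)
          (⨆ r : Ioi (0 : ℝ), |Xminus u ((r : ℝ), t)|)
        ≤ max (⨆ r : Ioi (0 : ℝ), |Xplus u ((r : ℝ), 0)|)
            (⨆ r : Ioi (0 : ℝ), |Xminus u ((r : ℝ), 0)|) := by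
  intro t ht
  rcases eq_or_lt_of_le ht with h0 | hT
  · rw [← h0]
  haveI : Nonempty (Ioi (0:ℝ)) := ⟨⟨1, by norm_num⟩⟩
  obtain ⟨R, hR0, hvan⟩ := hsupp t hT
  have hXpC : Continuous (Xplus u) := (contDiff_Xplus hu).continuous
  have hXmC : Continuous (Xminus u) := (contDiff_Xminus hu).continuous
  set Q : ℝ × ℝ → ℝ := fun z => max ((Xplus u z)^2) ((Xminus u z)^2) with hQdef
  have hQC : Continuous Q := (hXpC.pow 2).max (hXmC.pow 2)
  have hQnn : ∀ z, 0 ≤ Q z := fun z => le_trans (sq_nonneg _) (le_max_left _ _)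
  set K : Set (ℝ × ℝ) := Icc (-R) R ×ˢ Icc (0:ℝ) t with hKdef
  have hK : IsCompact K := isCompact_Icc.prod isCompact_Icc
  obtain ⟨B, hB⟩ := hK.exists_bound_of_continuousOn hQC.continuousOn
  set B' : ℝ := max B 0 with hB'def
  have hQbdd : ∀ r s, s ∈ Icc 0 t → Q (r, s) ≤ B' := by
    intro r s hs
    rcases le_or_gt (|r|) R with hle | hgt
    · have hmem : (r, s) ∈ K := by
        constructor
        · exact abs_le.mp hle
        · exact hs
      calc Q (r, s) ≤ |Q (r, s)| := le_abs_self _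
        _ = ‖Q (r, s)‖ := rfl
        _ ≤ B := hB _ hmem
        _ ≤ B' := le_max_left _ _
    · obtain ⟨hXp0, hXm0⟩ := X_supp hu hT hvan hgt hs
      rw [hQdef]
      simp only [hXp0, hXm0]
      simp only [ne_eq, OfNat.ofNat_ne_zero, not_false_eq_true, zero_pow, max_self]
      exact le_max_right _ _
  -- the sup in space
  set Φ : ℝ → ℝ := fun s => ⨆ r : ℝ, Q (r, s) with hΦdef
  have hbdd : ∀ s ∈ Icc (0:ℝ) t, BddAbove (Set.range fun r : ℝ => Q (r, s)) := by
    intro s hs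
    exact ⟨B', by rintro _ ⟨r, rfl⟩; exact hQbdd r s hs⟩
  have hQleΦ : ∀ r s, s ∈ Icc (0:ℝ) t → Q (r, s) ≤ Φ s := by
    intro r s hs
    exact le_ciSup (hbdd s hs) r
  have hΦleB : ∀ s ∈ Icc (0:ℝ) t, Φ s ≤ B' := by
    intro s hs
    exact ciSup_le (fun r => hQbdd r s hs)
  -- sup in time
  set Z : ℝ := sSup (Φ '' Icc 0 t) with hZdef
  have hZb : BddAbove (Φ '' Icc 0 t) := by
    refine ⟨B', ?_⟩
    rintro _ ⟨s, hs, rfl⟩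
    exact hΦleB s hs
  have himne : (Φ '' Icc 0 t).Nonempty :=
    ⟨Φ 0, ⟨0, ⟨le_rfl, le_of_lt hT⟩, rfl⟩⟩
  have hΦleZ : ∀ s ∈ Icc (0:ℝ) t, Φ s ≤ Z := fun s hs => le_csSup hZb ⟨s, hs, rfl⟩
  -- the initial datum
  set A : ℝ := max (⨆ r : Ioi (0 : ℝ), |Xplus u ((r : ℝ), 0)|)
      (⨆ r : Ioi (0 : ℝ), |Xminus u ((r : ℝ), 0)|) with hAdef
  have h0mem : (0:ℝ) ∈ Icc (0:ℝ) t := ⟨le_rfl, le_of_lt hT⟩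
  have habs_p : ∀ r : ℝ, |Xplus u (r, 0)| ≤ Real.sqrt B' := by
    intro r
    have h1 : (Xplus u (r, 0))^2 ≤ B' := le_trans (le_max_left _ _) (hQbdd r 0 h0mem)
    have := Real.sqrt_le_sqrt h1
    rwa [Real.sqrt_sq_eq_abs] at this
  have habs_m : ∀ r : ℝ, |Xminus u (r, 0)| ≤ Real.sqrt B' := by
    intro r
    have h1 : (Xminus u (r, 0))^2 ≤ B' := le_trans (le_max_right _ _) (hQbdd r 0 h0mem)
    have := Real.sqrt_le_sqrt h1
    rwa [Real.sqrt_sq_eq_abs] at this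
  have hbddp : BddAbove (Set.range fun r : Ioi (0:ℝ) => |Xplus u ((r : ℝ), 0)|) :=
    ⟨Real.sqrt B', by rintro _ ⟨r, rfl⟩; exact habs_p _⟩
  have hbddm : BddAbove (Set.range fun r : Ioi (0:ℝ) => |Xminus u ((r : ℝ), 0)|) :=
    ⟨Real.sqrt B', by rintro _ ⟨r, rfl⟩; exact habs_m _⟩
  have hA0 : 0 ≤ A := by
    have h1 : |Xplus u ((1:ℝ), 0)| ≤ ⨆ r : Ioi (0:ℝ), |Xplus u ((r : ℝ), 0)| :=
      le_ciSup hbddp ⟨1, by norm_num⟩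
    exact le_trans (le_trans (abs_nonneg _) h1) (le_max_left _ _)
  -- Q at time 0 is bounded by A²
  have hpos : ∀ r : ℝ, 0 < r → Q (r, 0) ≤ A^2 := by
    intro r hr
    have h1 : |Xplus u (r, 0)| ≤ A := by
      have := le_ciSup hbddp ⟨r, hr⟩
      exact le_trans this (le_max_left _ _)
    have h2 : |Xminus u (r, 0)| ≤ A := by
      have := le_ciSup hbddm ⟨r, hr⟩
      exact le_trans this (le_max_right _ _)
    apply max_le
    · nlinarith [abs_nonneg (Xplus u (r, 0)), sq_abs (Xplus u (r, 0))]
    · nlinarith [abs_nonneg (Xminus u (r, 0)), sq_abs (Xminus u (r, 0))]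
  have hQ0 : ∀ r : ℝ, Q (r, 0) ≤ A^2 := by
    intro r
    rcases lt_trichotomy r 0 with hneg | hzero | hposr
    · have hr' : 0 < -r := by linarith
      have e1' : Xplus u (r, 0) = - Xminus u (-r, 0) := by
        have := Xplus_par hu hrad le_rfl (-r)
        rwa [neg_neg] at this
      have e2' : Xminus u (r, 0) = - Xplus u (-r, 0) := by
        have := Xminus_par hu hrad le_rfl (-r)
        rwa [neg_neg] at this
      have : Q (r, 0) = Q (-r, 0) := by
        rw [hQdef]
        simp only [e1', e2', neg_sq]
        rw [max_comm]
      rw [this]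
      exact hpos (-r) hr'
    · subst hzero
      have htend : Filter.Tendsto (fun r : ℝ => Q (r, 0)) (nhdsWithin 0 (Ioi 0))
          (nhds (Q (0, 0))) := by
        have hc : Continuous (fun r : ℝ => Q (r, 0)) :=
          hQC.comp (continuous_id.prodMk continuous_const)
        exact (hc.tendsto 0).mono_left nhdsWithin_le_nhds
      apply le_of_tendsto htend
      filter_upwards [self_mem_nhdsWithin] with r hr
      exact hpos r hr
    · exact hpos r hposr
  have hΦ0 : Φ 0 ≤ A^2 := ciSup_le hQ0
  -- bound on the damping coefficient
  have hf3 : ContDiff ℝ 3 (prof u) := contDiff_prof hu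
  have hcC : Continuous (fun z : ℝ × ℝ => p * |d2 (prof u) (z.1, z.2)| ^ (p - 1)) := by
    have h1 : Continuous (d2 (prof u)) :=
      (cd_apply (m := 2) hf3 (by norm_num) ((0:ℝ),(1:ℝ))).continuous
    have h2 : Continuous (fun z : ℝ × ℝ => |d2 (prof u) z| ^ (p - 1)) := by
      apply Continuous.rpow_const h1.abs
      intro z
      right
      linarith
    simpa using continuous_const.fun_mul h2
  obtain ⟨C0, hC0⟩ := hK.exists_bound_of_continuousOn hcC.continuousOn
  set Cc : ℝ := max C0 0 with hCcdef
  have hCcnn : (0:ℝ) ≤ Cc := le_max_right _ _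
  have hc_le : ∀ r s, s ∈ Icc (0:ℝ) t → p * |d2 (prof u) (r, s)| ^ (p - 1) ≤ Cc := by
    intro r s hs
    rcases le_or_gt (|r|) R with hle | hgt
    · have hmem : (r, s) ∈ K := ⟨abs_le.mp hle, hs⟩
      calc p * |d2 (prof u) (r, s)| ^ (p - 1)
          ≤ |p * |d2 (prof u) (r, s)| ^ (p - 1)| := le_abs_self _
        _ ≤ C0 := hC0 _ hmem
        _ ≤ Cc := le_max_left _ _
    · have h0 : d2 (prof u) (r, s) = 0 := d2_prof_supp hu hT hvan (le_of_lt hgt) hs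
      rw [h0, abs_zero, Real.zero_rpow (by linarith : p - 1 ≠ 0), mul_zero]
      exact hCcnn
  -- pointwise bounds by Z
  have hQZ : ∀ r s, s ∈ Icc (0:ℝ) t →
      (Xplus u (r, s))^2 ≤ Z ∧ (Xminus u (r, s))^2 ≤ Z := by
    intro r s hs
    have h := le_trans (hQleΦ r s hs) (hΦleZ s hs)
    exact ⟨le_trans (le_max_left _ _) h, le_trans (le_max_right _ _) h⟩
  have hA2p : ∀ r, (Xplus u (r, 0))^2 ≤ A^2 :=
    fun r => le_trans (le_max_left _ _) (hQ0 r)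
  have hA2m : ∀ r, (Xminus u (r, 0))^2 ≤ A^2 :=
    fun r => le_trans (le_max_right _ _) (hQ0 r)
  have key : ∀ r s, s ∈ Icc (0:ℝ) t →
      Q (r, s) ≤ Z + (A^2 - Z) * Real.exp (-(Cc * s)) := by
    intro r s hs
    apply max_le
    · exact char_bound_plus hp hu heq hrad hCcnn hc_le hQZ hA2p hs
    · exact char_bound_minus hp hu heq hrad hCcnn hc_le hQZ hA2m hs
  -- conclude Z ≤ A²
  have hZA : Z ≤ A^2 := by
    by_contra hcon
    push_neg at hcon
    have hδ : ∀ s ∈ Icc (0:ℝ) t, Φ s ≤ Z + (A^2 - Z) * Real.exp (-(Cc * t)) := by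
      intro s hs
      apply ciSup_le
      intro r
      refine le_trans (key r s hs) ?_
      have hexp : Real.exp (-(Cc * t)) ≤ Real.exp (-(Cc * s)) := by
        apply Real.exp_le_exp.mpr
        have : Cc * s ≤ Cc * t := mul_le_mul_of_nonneg_left hs.2 hCcnn
        linarith
      nlinarith [hexp, hcon]
    have hZδ : Z ≤ Z + (A^2 - Z) * Real.exp (-(Cc * t)) := by
      apply csSup_le himne
      rintro _ ⟨s, hs, rfl⟩
      exact hδ s hs
    nlinarith [Real.exp_pos (-(Cc * t)), hcon, hZδ]
  -- final estimate
  have hfinal : ∀ r : ℝ, 0 < r → |Xplus u (r, t)| ≤ A ∧ |Xminus u (r, t)| ≤ A := by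
    intro r hr
    have htmem : t ∈ Icc (0:ℝ) t := ⟨le_of_lt hT, le_rfl⟩
    have h := le_trans (le_trans (hQleΦ r t htmem) (hΦleZ t htmem)) hZA
    constructor
    · have h1 : (Xplus u (r, t))^2 ≤ A^2 := le_trans (le_max_left _ _) h
      nlinarith [abs_nonneg (Xplus u (r, t)), sq_abs (Xplus u (r, t)), hA0]
    · have h1 : (Xminus u (r, t))^2 ≤ A^2 := le_trans (le_max_right _ _) h
      nlinarith [abs_nonneg (Xminus u (r, t)), sq_abs (Xminus u (r, t)), hA0]
  apply max_le
  · apply ciSup_le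
    intro r
    exact (hfinal r r.2).1
  · apply ciSup_le
    intro r
    exact (hfinal r r.2).2
end
end
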